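/- Let A ∈ ℝ^{n₁×⋯×n_d} have ttrank(A) = (r₁,…,r_{d−1}) and consider minimal TT factorizations of A: a left-orthogonal one {U_s}_{s=1}^d, a right-orthogonal one {V_s}_{s=1}^d, and a t-orthogonal one {T_s}_{s=1}^d for some t ∈ [d]. Then there exist orthogonal matrices {Q_s}_{s=1}^{d−1}, Q_s ∈ ℝ^{r_s×r_s}, with Q₀ = Q_d = 1, such that T_s^< = (I_{n_s} ⊗ Q_{s−1}ᵀ) U_s^< Q_s for s = 1,…,t−1 and T_s^> = Q_{s−1}ᵀ V_s^> (I_{n_s} ⊗ Q_s) for s = t+1,…,d, and one of the following holds: if t = d then T_t^< = (I_{n_t} ⊗ Q_{t−1}ᵀ) U_t^<; if t = 1 then T_t^> = V_t^> (I_{n_t} ⊗ Q_t); if 1 < t < d then col(T_t^<) = col((I_{n_t} ⊗ Q_{t−1}ᵀ) U_t^<) and row(T_t^>) = row(V_t^> (I_{n_t} ⊗ Q_t)). -/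

import Mathlib

open scoped BigOperators
open Matrix

namespace TT

/-- Evaluation of a tensor-train factorization: `A(i₁,…,i_d) = Σ_α Π_s G_s(α_{s-1}, i_s, α_s)`. -/
noncomputable def ttEval {d : ℕ} (n : Fin d → ℕ) (ρ : Fin (d + 1) → ℕ)
    (G : ∀ s : Fin d, Fin (ρ s.castSucc) → Fin (n s) → Fin (ρ s.succ) → ℝ) :
    (∀ s : Fin d, Fin (n s)) → ℝ := fun i =>
  ∑ α : ∀ s : Fin (d + 1), Fin (ρ s), ∏ s : Fin d, G s (α s.castSucc) (i s) (α s.succ)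

/-- Left unfolding `G^< ∈ ℝ^{np×q}` of a third-order tensor `G ∈ ℝ^{p×n×q}`
(the row index `(i,a)` corresponds to the paper's `a + (i−1)p`). -/
def leftUnf {p n q : ℕ} (G : Fin p → Fin n → Fin q → ℝ) :
    Matrix (Fin n × Fin p) (Fin q) ℝ := fun x c => G x.2 x.1 c

/-- Right unfolding `G^> ∈ ℝ^{p×nq}` of a third-order tensor `G ∈ ℝ^{p×n×q}`. -/
def rightUnf {p n q : ℕ} (G : Fin p → Fin n → Fin q → ℝ) :
    Matrix (Fin p) (Fin n × Fin q) ℝ := fun a x => G a x.1 x.2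

/-- A third-order tensor is left-orthogonal if its left unfolding has orthonormal columns. -/
def LeftOrth {p n q : ℕ} (G : Fin p → Fin n → Fin q → ℝ) : Prop :=
  (leftUnf G)ᵀ * leftUnf G = 1

/-- A third-order tensor is right-orthogonal if its right unfolding has orthonormal rows. -/
def RightOrth {p n q : ℕ} (G : Fin p → Fin n → Fin q → ℝ) : Prop :=
  rightUnf G * (rightUnf G)ᵀ = 1

/-- A TT factorization is minimal if the left and right unfoldings of all cores are
full-rank. -/
def MinimalTT {d : ℕ} {n : Fin d → ℕ} {ρ : Fin (d + 1) → ℕ}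
    (G : ∀ s : Fin d, Fin (ρ s.castSucc) → Fin (n s) → Fin (ρ s.succ) → ℝ) : Prop :=
  ∀ s : Fin d, (leftUnf (G s)).rank = ρ s.succ ∧ (rightUnf (G s)).rank = ρ s.castSucc

/-- A TT factorization is `t`-orthogonal (`t ∈ [d]`, 1-based) if the cores `1,…,t−1` are
left-orthogonal and the cores `t+1,…,d` are right-orthogonal. -/
def TOrth {d : ℕ} {n : Fin d → ℕ} {ρ : Fin (d + 1) → ℕ} (t : ℕ)
    (G : ∀ s : Fin d, Fin (ρ s.castSucc) → Fin (n s) → Fin (ρ s.succ) → ℝ) : Prop :=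
  (∀ s : Fin d, s.val + 1 < t → LeftOrth (G s)) ∧
  (∀ s : Fin d, t < s.val + 1 → RightOrth (G s))

/-- Column space of a matrix. -/
def colSpace {γ δ : Type} [Fintype δ] [DecidableEq δ] (M : Matrix γ δ ℝ) :
    Submodule ℝ (γ → ℝ) := LinearMap.range M.mulVecLin

/-- Row space of a matrix. -/
def rowSpace {γ δ : Type} [Fintype γ] [DecidableEq γ] (M : Matrix γ δ ℝ) :
    Submodule ℝ (δ → ℝ) := colSpace Mᵀ

/-- `‖G‖_{u,∞} = max_i ‖G(:,i,:)‖_u` for a third-order tensor `G ∈ ℝ^{p×n×q}`. -/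
noncomputable def sliceNormInf (ν : ∀ p q : ℕ, Matrix (Fin p) (Fin q) ℝ → ℝ)
    {p n q : ℕ} (G : Fin p → Fin n → Fin q → ℝ) : ℝ :=
  ⨆ i : Fin n, ν p q (fun a b => G a i b)

/-- The `p`-block coherence `μ_{u,p}(M)` of a subspace `M ⊆ ℝ^{np}` with respect to a matrix
norm `‖·‖_u`, defined through any matrix `Q` whose columns form an orthonormal basis of `M`
(the value is independent of the choice of `Q` for a unitarily invariant norm). -/
noncomputable def blockCoh (ν : ∀ p q : ℕ, Matrix (Fin p) (Fin q) ℝ → ℝ) (p n : ℕ)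
    (M : Submodule ℝ ((Fin n × Fin p) → ℝ)) : ℝ :=
  sSup { y | ∃ (q : ℕ) (Q : Matrix (Fin n × Fin p) (Fin q) ℝ),
    Qᵀ * Q = 1 ∧ colSpace Q = M ∧
    y = ((n * p : ℝ) / q) * ⨆ i : Fin n, (ν q p (fun α j => Q (i, j) α)) ^ 2 }

/-- Left coherence `μ_{u,<}(G) = μ_{u,p}(col(G^<))` of a third-order tensor `G ∈ ℝ^{p×n×q}`. -/
noncomputable def muLeft (ν : ∀ p q : ℕ, Matrix (Fin p) (Fin q) ℝ → ℝ)
    {p n q : ℕ} (G : Fin p → Fin n → Fin q → ℝ) : ℝ :=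
  blockCoh ν p n (colSpace (leftUnf G))

/-- Right coherence `μ_{u,>}(G) = μ_{u,q}(row(G^>))` of a third-order tensor `G ∈ ℝ^{p×n×q}`. -/
noncomputable def muRight (ν : ∀ p q : ℕ, Matrix (Fin p) (Fin q) ℝ → ℝ)
    {p n q : ℕ} (G : Fin p → Fin n → Fin q → ℝ) : ℝ :=
  blockCoh ν q n (rowSpace (rightUnf G))

end TT

namespace TT
set_option linter.unusedSectionVars false

section Helpers
variable {ι : Type} [DecidableEq ι] [Fintype ι] {β : ι → Type} [∀ j, Fintype (β j)]
  [∀ j, DecidableEq (β j)]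

lemma piSplit_update (k : ι) (c x : β k) (h : ∀ j : {j // j ≠ k}, β j) :
    (Equiv.piSplitAt k β).symm (x, h) =
      Function.update ((Equiv.piSplitAt k β).symm (c, h)) k x := by
  funext j
  by_cases hj : j = k
  · subst hj; simp [Equiv.piSplitAt]
  · simp [Equiv.piSplitAt, hj, Function.update_of_ne hj]

lemma piSplit_coord (k : ι) (x : β k) (h : ∀ j : {j // j ≠ k}, β j) :
    ((Equiv.piSplitAt k β).symm (x, h)) k = x := by
  simp [Equiv.piSplitAt]

lemma piSplit_sum (k : ι) (f : (∀ j, β j) → ℝ) :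
    ∑ g, f g = ∑ x : β k, ∑ h, f ((Equiv.piSplitAt k β).symm (x, h)) := by
  rw [← Equiv.sum_comp (Equiv.piSplitAt k β).symm f, Fintype.sum_prod_type]

lemma update_sum_aux (k : ι) (c : β k) (f : (∀ j, β j) → ℝ)
    (hf : ∀ g x, f (Function.update g k x) = f g) :
    (Fintype.card (β k) : ℝ) * ∑ g, (if g k = c then f g else 0) = ∑ g, f g := by
  have hval : ∀ (x : β k) (h : ∀ j : {j // j ≠ k}, β j),
      f ((Equiv.piSplitAt k β).symm (x, h)) = f ((Equiv.piSplitAt k β).symm (c, h)) := by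
    intro x h
    rw [piSplit_update k c x h, hf]
  rw [piSplit_sum k f, piSplit_sum k (fun g => if g k = c then f g else 0)]
  simp only [piSplit_coord]
  calc (Fintype.card (β k) : ℝ) *
        ∑ x : β k, ∑ h, (if x = c then f ((Equiv.piSplitAt k β).symm (x, h)) else 0)
      = (Fintype.card (β k) : ℝ) * ∑ h, f ((Equiv.piSplitAt k β).symm (c, h)) := by
        congr 1
        rw [Finset.sum_comm]
        simp
    _ = ∑ x : β k, ∑ h, f ((Equiv.piSplitAt k β).symm (x, h)) := by
        rw [Finset.sum_congr rfl (fun x _ => Finset.sum_congr rfl fun h _ => hval x h)]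
        rw [Finset.sum_const, nsmul_eq_mul]
        simp

lemma coord_factor_aux (k : ι) (u : (∀ j, β j) → ℝ) (v : β k → ℝ)
    (hu : ∀ g x, u (Function.update g k x) = u g) :
    (Fintype.card (β k) : ℝ) * ∑ g, u g * v (g k) = (∑ x, v x) * ∑ g, u g := by
  rcases isEmpty_or_nonempty (β k) with he | hne
  · simp
  · obtain ⟨c⟩ := hne
    have hval : ∀ (x : β k) (h : ∀ j : {j // j ≠ k}, β j),
        u ((Equiv.piSplitAt k β).symm (x, h)) = u ((Equiv.piSplitAt k β).symm (c, h)) := by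
      intro x h
      rw [piSplit_update k c x h, hu]
    rw [piSplit_sum k (fun g => u g * v (g k)), piSplit_sum k u]
    simp only [piSplit_coord]
    have h1 : ∀ x : β k, ∑ h, u ((Equiv.piSplitAt k β).symm (x, h)) * v x
        = v x * ∑ h, u ((Equiv.piSplitAt k β).symm (c, h)) := by
      intro x
      rw [Finset.sum_congr rfl (fun h _ => by rw [hval x h])]
      rw [← Finset.sum_mul, mul_comm]
    have h2 : ∀ x : β k, ∑ h, u ((Equiv.piSplitAt k β).symm (x, h))
        = ∑ h, u ((Equiv.piSplitAt k β).symm (c, h)) := by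
      intro x
      exact Finset.sum_congr rfl (fun h _ => hval x h)
    rw [Finset.sum_congr rfl (fun x _ => h1 x), Finset.sum_congr rfl (fun x _ => h2 x),
      ← Finset.sum_mul, Finset.sum_const, nsmul_eq_mul]
    rw [Finset.card_univ]; ring

/-- summing an indicator-constrained sum over the constraint value -/
lemma sum_indicator_coord (k : ι) (f : (∀ j, β j) → ℝ) :
    ∑ c : β k, ∑ g, (if g k = c then f g else 0) = ∑ g, f g := by
  rw [Finset.sum_comm]
  simp

end Helpers
section Core

variable {d : ℕ} {n : Fin d → ℕ} {ρ : Fin (d + 1) → ℕ}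

/-- Partial left contraction of the first `s` cores, as a matrix indexed by full index
tuples (it only depends on the coordinates `< s`). -/
noncomputable def Lmat (G : ∀ s : Fin d, Fin (ρ s.castSucc) → Fin (n s) → Fin (ρ s.succ) → ℝ) :
    ∀ s : Fin (d + 1), Matrix (∀ j : Fin d, Fin (n j)) (Fin (ρ s)) ℝ :=
  Fin.induction (fun _ _ => 1)
    (fun s prev => fun i α => ∑ β, prev i β * G s β (i s) α)

lemma Lmat_zero (G : ∀ s : Fin d, Fin (ρ s.castSucc) → Fin (n s) → Fin (ρ s.succ) → ℝ)
    (i : ∀ j : Fin d, Fin (n j)) (β : Fin (ρ 0)) : Lmat G 0 i β = 1 := rfl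

lemma Lmat_succ (G : ∀ s : Fin d, Fin (ρ s.castSucc) → Fin (n s) → Fin (ρ s.succ) → ℝ)
    (s : Fin d) (i : ∀ j : Fin d, Fin (n j)) (α : Fin (ρ s.succ)) :
    Lmat G s.succ i α = ∑ β, Lmat G s.castSucc i β * G s β (i s) α := by
  rfl

/-- Partial right contraction of the cores `≥ s` (depends only on coordinates `≥ s`). -/
noncomputable def Rmat (G : ∀ s : Fin d, Fin (ρ s.castSucc) → Fin (n s) → Fin (ρ s.succ) → ℝ) :
    ∀ s : Fin (d + 1), Matrix (Fin (ρ s)) (∀ j : Fin d, Fin (n j)) ℝ :=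
  Fin.reverseInduction (fun _ _ => 1)
    (fun s next => fun β i => ∑ γ, G s β (i s) γ * next γ i)

lemma Rmat_last (G : ∀ s : Fin d, Fin (ρ s.castSucc) → Fin (n s) → Fin (ρ s.succ) → ℝ)
    (β : Fin (ρ (Fin.last d))) (i : ∀ j : Fin d, Fin (n j)) : Rmat G (Fin.last d) β i = 1 := by
  rw [Rmat]; exact congrFun (congrFun (Fin.reverseInduction_last (motive := fun s => Matrix (Fin (ρ s)) (∀ j : Fin d, Fin (n j)) ℝ)) β) i

lemma Rmat_castSucc (G : ∀ s : Fin d, Fin (ρ s.castSucc) → Fin (n s) → Fin (ρ s.succ) → ℝ)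
    (s : Fin d) (β : Fin (ρ s.castSucc)) (i : ∀ j : Fin d, Fin (n j)) :
    Rmat G s.castSucc β i = ∑ γ, G s β (i s) γ * Rmat G s.succ γ i := by
  rw [Rmat, Rmat]; exact congrFun (congrFun (Fin.reverseInduction_castSucc (motive := fun s => Matrix (Fin (ρ s)) (∀ j : Fin d, Fin (n j)) ℝ) s) β) i

lemma Lmat_ext (G : ∀ s : Fin d, Fin (ρ s.castSucc) → Fin (n s) → Fin (ρ s.succ) → ℝ) :
    ∀ s : Fin (d + 1), ∀ i i' : ∀ j : Fin d, Fin (n j),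
      (∀ j : Fin d, (j : ℕ) < (s : ℕ) → i j = i' j) → Lmat G s i = Lmat G s i' := by
  intro s
  induction s using Fin.induction with
  | zero => intro i i' _; rfl
  | succ s ih =>
    intro i i' h
    funext α
    rw [Lmat_succ, Lmat_succ]
    have hi : i s = i' s := h s (by simp)
    have hL : Lmat G s.castSucc i = Lmat G s.castSucc i' :=
      ih i i' fun j hj => h j (by simp only [Fin.coe_castSucc] at hj; simp; omega)
    rw [hL, hi]

lemma Rmat_ext (G : ∀ s : Fin d, Fin (ρ s.castSucc) → Fin (n s) → Fin (ρ s.succ) → ℝ) :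
    ∀ s : Fin (d + 1), ∀ i i' : ∀ j : Fin d, Fin (n j),
      (∀ j : Fin d, (s : ℕ) ≤ (j : ℕ) → i j = i' j) →
      ∀ β, Rmat G s β i = Rmat G s β i' := by
  intro s
  induction s using Fin.reverseInduction with
  | last => intro i i' _ β; rw [Rmat_last, Rmat_last]
  | cast s ih =>
    intro i i' h β
    rw [Rmat_castSucc, Rmat_castSucc]
    have hi : i s = i' s := h s (by simp)
    refine Finset.sum_congr rfl fun γ _ => ?_
    rw [hi, ih i i' (fun j hj => h j (by simp only [Fin.val_succ] at hj; simp; omega)) γ]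

lemma Lmat_update (G : ∀ s : Fin d, Fin (ρ s.castSucc) → Fin (n s) → Fin (ρ s.succ) → ℝ)
    (s : Fin (d + 1)) (i : ∀ j : Fin d, Fin (n j)) (k : Fin d) (x : Fin (n k))
    (hk : (s : ℕ) ≤ (k : ℕ)) : Lmat G s (Function.update i k x) = Lmat G s i := by
  apply Lmat_ext
  intro j hj
  rw [Function.update_of_ne]
  rintro rfl; omega

lemma Rmat_update (G : ∀ s : Fin d, Fin (ρ s.castSucc) → Fin (n s) → Fin (ρ s.succ) → ℝ)
    (s : Fin (d + 1)) (i : ∀ j : Fin d, Fin (n j)) (k : Fin d) (x : Fin (n k))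
    (hk : (k : ℕ) < (s : ℕ)) (β : Fin (ρ s)) :
    Rmat G s β (Function.update i k x) = Rmat G s β i := by
  apply Rmat_ext
  intro j hj
  rw [Function.update_of_ne]
  rintro rfl; omega

end Core
section MatHelpers

lemma mulVec_inj_of_rank {γ : Type} [Fintype γ] {q : ℕ} (M : Matrix γ (Fin q) ℝ)
    (h : M.rank = q) : Function.Injective M.mulVec := by
  have h2 := LinearMap.finrank_range_add_finrank_ker M.mulVecLin
  rw [Module.finrank_fintype_fun_eq_card, Fintype.card_fin] at h2
  rw [Matrix.rank] at h
  have hker : Module.finrank ℝ (LinearMap.ker M.mulVecLin) = 0 := by omega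
  rw [Submodule.finrank_eq_zero] at hker
  have hinj := LinearMap.ker_eq_bot.mp hker
  intro v w hvw
  exact hinj hvw

lemma vecMul_inj_of_rank {δ : Type} [Fintype δ] {p : ℕ} (M : Matrix (Fin p) δ ℝ)
    (h : M.rank = p) : Function.Injective (fun v => Matrix.vecMul v M) := by
  have := mulVec_inj_of_rank Mᵀ (by rw [Matrix.rank_transpose]; exact h)
  intro v w hvw
  apply this
  rw [Matrix.mulVec_transpose, Matrix.mulVec_transpose]
  exact hvw

lemma mul_left_cancel_of_inj {γ : Type} [Fintype γ] {a b : ℕ} (L : Matrix γ (Fin a) ℝ)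
    (hL : Function.Injective L.mulVec) {X Y : Matrix (Fin a) (Fin b) ℝ}
    (h : L * X = L * Y) : X = Y := by
  ext β j
  have h1 := congrArg (fun M : Matrix γ (Fin b) ℝ => M.mulVec (Pi.single j 1)) h
  simp only [← Matrix.mulVec_mulVec] at h1
  have h2 := hL h1
  have h3 := congrFun h2 β
  simpa [Matrix.mulVec_single] using h3

lemma mul_right_cancel_of_inj {δ : Type} [Fintype δ] {a b : ℕ} (R : Matrix (Fin a) δ ℝ)
    (hR : Function.Injective (fun v => Matrix.vecMul v R)) {X Y : Matrix (Fin b) (Fin a) ℝ}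
    (h : X * R = Y * R) : X = Y := by
  have h' : Rᵀ * Xᵀ = Rᵀ * Yᵀ := by
    rw [← Matrix.transpose_mul, ← Matrix.transpose_mul, h]
  have : Xᵀ = Yᵀ := by
    apply mul_left_cancel_of_inj Rᵀ _ h'
    intro v w hvw
    apply hR
    simpa [Matrix.mulVec_transpose] using hvw
  calc X = Xᵀᵀ := by rw [Matrix.transpose_transpose]
  _ = Yᵀᵀ := by rw [this]
  _ = Y := by rw [Matrix.transpose_transpose]

lemma exists_inv_of_mulVec_inj {q : ℕ} (S : Matrix (Fin q) (Fin q) ℝ)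
    (h : Function.Injective S.mulVec) : ∃ B, S * B = 1 ∧ B * S = 1 := by
  have hinj : Function.Injective (Matrix.toLin' S) := by
    intro v w hvw
    apply h
    simpa [Matrix.toLin'_apply] using hvw
  have hsurj : Function.Surjective (Matrix.toLin' S) :=
    (LinearMap.injective_iff_surjective).mp hinj
  let e := LinearEquiv.ofBijective (Matrix.toLin' S) ⟨hinj, hsurj⟩
  refine ⟨LinearMap.toMatrix' (e.symm : (Fin q → ℝ) →ₗ[ℝ] (Fin q → ℝ)), ?_, ?_⟩
  · apply Matrix.toLin'.injective
    rw [Matrix.toLin'_mul, Matrix.toLin'_one, Matrix.toLin'_toMatrix']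
    refine LinearMap.ext fun v => ?_
    simp only [LinearMap.comp_apply, LinearMap.id_apply]
    show Matrix.toLin' S (e.symm v) = v
    exact e.apply_symm_apply v
  · apply Matrix.toLin'.injective
    rw [Matrix.toLin'_mul, Matrix.toLin'_one, Matrix.toLin'_toMatrix']
    refine LinearMap.ext fun v => ?_
    simp only [LinearMap.comp_apply, LinearMap.id_apply]
    show e.symm (Matrix.toLin' S v) = v
    exact e.symm_apply_apply v

lemma exists_inv_of_gram {a : ℕ} {δ : Type} [Fintype δ] (R : Matrix (Fin a) δ ℝ)
    (hR : Function.Injective (fun v => Matrix.vecMul v R)) :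
    ∃ B, (R * Rᵀ) * B = 1 ∧ B * (R * Rᵀ) = 1 := by
  apply exists_inv_of_mulVec_inj
  intro v w hvw
  have hz : ∀ u : Fin a → ℝ, (R * Rᵀ).mulVec u = 0 → u = 0 := by
    intro u hu
    have h1 : u ⬝ᵥ ((R * Rᵀ).mulVec u) = 0 := by rw [hu]; simp
    rw [← Matrix.mulVec_mulVec, Matrix.dotProduct_mulVec] at h1
    rw [Matrix.mulVec_transpose] at h1
    have h2 : Matrix.vecMul u R = 0 := dotProduct_self_eq_zero.mp h1
    have := hR (a₁ := u) (a₂ := 0) (by simpa using h2)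
    exact this
  have : (R * Rᵀ).mulVec (v - w) = 0 := by
    rw [Matrix.mulVec_sub, hvw, sub_self]
  have := hz _ this
  exact sub_eq_zero.mp this
  
end MatHelpers
section Path

variable {d : ℕ} {n : Fin d → ℕ} {ρ : Fin (d + 1) → ℕ}

lemma prod_ge_split (s : Fin d) (g : Fin d → ℝ) :
    ∏ j : Fin d, (if (s : ℕ) ≤ (j : ℕ) then g j else 1)
      = g s * ∏ j : Fin d, (if (s : ℕ) + 1 ≤ (j : ℕ) then g j else 1) := by
  have h : ∀ j : Fin d, (if (s : ℕ) ≤ (j : ℕ) then g j else 1)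
      = (if j = s then g j else 1) * (if (s : ℕ) + 1 ≤ (j : ℕ) then g j else 1) := by
    intro j
    rcases eq_or_ne j s with rfl | hne
    · simp
    · have hv : (j : ℕ) ≠ (s : ℕ) := fun hc => hne (Fin.ext hc)
      by_cases hle : (s : ℕ) ≤ (j : ℕ)
      · rw [if_pos hle, if_neg hne, if_pos (by omega), one_mul]
      · rw [if_neg hle, if_neg hne, if_neg (by omega), one_mul]
  rw [Finset.prod_congr rfl (fun j _ => h j), Finset.prod_mul_distrib, Finset.prod_ite_eq']
  simp

lemma prod_le_split (s : Fin d) (g : Fin (d + 1) → ℝ) :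
    ∏ j : Fin (d + 1), (if (j : ℕ) ≤ (s : ℕ) + 1 then g j else 1)
      = (∏ j : Fin (d + 1), (if (j : ℕ) ≤ (s : ℕ) then g j else 1)) * g s.succ := by
  have h : ∀ j : Fin (d + 1), (if (j : ℕ) ≤ (s : ℕ) + 1 then g j else 1)
      = (if (j : ℕ) ≤ (s : ℕ) then g j else 1) * (if j = s.succ then g j else 1) := by
    intro j
    rcases eq_or_ne j s.succ with rfl | hne
    · simp
    · have hv : (j : ℕ) ≠ (s : ℕ) + 1 := by
        intro hc; exact hne (Fin.ext (by simpa using hc))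
      by_cases hle : (j : ℕ) ≤ (s : ℕ)
      · rw [if_pos (by omega), if_pos hle, if_neg hne, mul_one]
      · rw [if_neg (by omega), if_neg hle, if_neg hne, mul_one]
  rw [Finset.prod_congr rfl (fun j _ => h j), Finset.prod_mul_distrib, Finset.prod_ite_eq']
  simp

lemma prod_le_zero (g : Fin (d + 1) → ℝ) :
    ∏ j : Fin (d + 1), (if (j : ℕ) ≤ 0 then g j else 1) = g 0 := by
  have h : ∀ j : Fin (d + 1), (if (j : ℕ) ≤ 0 then g j else 1)
      = (if j = 0 then g j else 1) := by
    intro j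
    rcases eq_or_ne j 0 with rfl | hne
    · simp
    · rw [if_neg hne, if_neg (by intro h; exact hne (Fin.ext (Nat.le_zero.mp h)))]
  rw [Finset.prod_congr rfl (fun j _ => h j), Finset.prod_ite_eq']
  simp

lemma prod_le_last (g : Fin (d + 1) → ℝ) :
    ∏ j : Fin (d + 1), (if (j : ℕ) ≤ ((Fin.last d : Fin (d + 1)) : ℕ) then g j else 1)
      = ∏ j : Fin (d + 1), g j := by
  refine Finset.prod_congr rfl fun j _ => ?_
  rw [if_pos]
  simpa using Nat.lt_succ_iff.mp j.isLt

lemma dims_pos (hρ0 : ρ 0 = 1)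
    {G : ∀ s : Fin d, Fin (ρ s.castSucc) → Fin (n s) → Fin (ρ s.succ) → ℝ}
    (hmin : MinimalTT G) : (∀ s, 0 < ρ s) ∧ (∀ j, 0 < n j) := by
  have key : ∀ s : Fin (d + 1), 0 < ρ s := by
    intro s
    induction s using Fin.induction with
    | zero => rw [hρ0]; exact one_pos
    | succ s ih =>
      have h1 := (hmin s).2
      have h2 := Matrix.rank_le_card_width (rightUnf (G s))
      rw [h1] at h2
      simp only [Fintype.card_prod, Fintype.card_fin] at h2
      have h3 : 0 < n s * ρ s.succ := lt_of_lt_of_le ih h2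
      rcases Nat.eq_zero_or_pos (ρ s.succ) with h0 | h0
      · rw [h0, Nat.mul_zero] at h3; exact absurd h3 (lt_irrefl 0)
      · exact h0
  refine ⟨key, fun j => ?_⟩
  have h1 := (hmin j).2
  have h2 := Matrix.rank_le_card_width (rightUnf (G j))
  rw [h1] at h2
  simp only [Fintype.card_prod, Fintype.card_fin] at h2
  have h3 : 0 < n j * ρ j.succ := lt_of_lt_of_le (key j.castSucc) h2
  rcases Nat.eq_zero_or_pos (n j) with h0 | h0
  · rw [h0, Nat.zero_mul] at h3; exact absurd h3 (lt_irrefl 0)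
  · exact h0

lemma pathR (hρ : ∀ s, 0 < ρ s)
    (G : ∀ s : Fin d, Fin (ρ s.castSucc) → Fin (n s) → Fin (ρ s.succ) → ℝ)
    (s : Fin (d + 1)) :
    ∀ (β : Fin (ρ s)) (i : ∀ j : Fin d, Fin (n j)),
      (∏ j : Fin (d + 1), if (j : ℕ) ≤ (s : ℕ) then (ρ j : ℝ) else 1) * Rmat G s β i
        = (ρ s : ℝ) * ∑ α : ∀ j : Fin (d + 1), Fin (ρ j),
            (if α s = β then (1:ℝ) else 0)
              * ∏ j : Fin d,
                  (if (s : ℕ) ≤ (j : ℕ) then G j (α j.castSucc) (i j) (α j.succ) else 1) := by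
  induction s using Fin.reverseInduction with
  | last =>
    intro β i
    rw [Rmat_last, mul_one, prod_le_last]
    have hsum : ∀ α : ∀ j : Fin (d + 1), Fin (ρ j),
        (if α (Fin.last d) = β then (1:ℝ) else 0)
          * (∏ j : Fin d, (if ((Fin.last d : Fin (d + 1)) : ℕ) ≤ (j : ℕ)
              then G j (α j.castSucc) (i j) (α j.succ) else 1))
        = (if α (Fin.last d) = β then (1:ℝ) else 0) := by
      intro α
      have : (∏ j : Fin d, (if ((Fin.last d : Fin (d + 1)) : ℕ) ≤ (j : ℕ)
          then G j (α j.castSucc) (i j) (α j.succ) else 1)) = 1 := by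
        refine Finset.prod_eq_one fun j _ => ?_
        rw [if_neg]
        simp only [Fin.val_last]
        omega
      rw [this, mul_one]
    rw [Finset.sum_congr rfl fun α _ => hsum α]
    have key := update_sum_aux (β := fun j : Fin (d + 1) => Fin (ρ j)) (Fin.last d) β
      (fun _ => (1:ℝ)) (fun g x => rfl)
    simp only [Fintype.card_fin] at key
    have : ∀ α : ∀ j : Fin (d + 1), Fin (ρ j),
        (if α (Fin.last d) = β then (1:ℝ) else 0)
          = (if α (Fin.last d) = β then (1:ℝ) else 0) := fun _ => rfl
    rw [show (∑ α : ∀ j : Fin (d + 1), Fin (ρ j), (if α (Fin.last d) = β then (1:ℝ) else 0))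
        = ∑ α : ∀ j : Fin (d + 1), Fin (ρ j),
            (if α (Fin.last d) = β then (fun _ => (1:ℝ)) α else 0) from rfl, key]
    rw [Finset.sum_const, nsmul_eq_mul, mul_one, Finset.card_univ, Fintype.card_pi]
    simp
  | cast s ih =>
    intro β i
    have hne : ((ρ s.succ : ℕ) : ℝ) ≠ 0 := Nat.cast_ne_zero.mpr (hρ s.succ).ne'
    apply mul_left_cancel₀ hne
    simp only [Fin.coe_castSucc, Fin.val_succ] at ih ⊢
    -- abbreviations
    set Pge' : (∀ j : Fin (d + 1), Fin (ρ j)) → ℝ :=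
      fun α => ∏ j : Fin d,
        (if (s : ℕ) + 1 ≤ (j : ℕ) then G j (α j.castSucc) (i j) (α j.succ) else 1) with hPge'
    -- LHS computation
    have hLHS : (ρ s.succ : ℝ) *
        ((∏ j : Fin (d + 1), if (j : ℕ) ≤ (s : ℕ) then (ρ j : ℝ) else 1)
          * Rmat G s.castSucc β i)
        = ∑ γ, G s β (i s) γ *
            ((ρ s.succ : ℝ) * ∑ α : ∀ j : Fin (d + 1), Fin (ρ j),
              (if α s.succ = γ then (1:ℝ) else 0) * Pge' α) := by
      have h1 : (ρ s.succ : ℝ) *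
          ((∏ j : Fin (d + 1), if (j : ℕ) ≤ (s : ℕ) then (ρ j : ℝ) else 1)
            * Rmat G s.castSucc β i)
          = (∏ j : Fin (d + 1), if (j : ℕ) ≤ (s : ℕ) + 1 then (ρ j : ℝ) else 1)
            * Rmat G s.castSucc β i := by
        rw [prod_le_split s (fun j => (ρ j : ℝ))]
        ring
      rw [h1, Rmat_castSucc, Finset.mul_sum]
      refine Finset.sum_congr rfl fun γ _ => ?_
      have h2 := ih γ i
      calc (∏ j : Fin (d + 1), if (j : ℕ) ≤ (s : ℕ) + 1 then (ρ j : ℝ) else 1)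
            * (G s β (i s) γ * Rmat G s.succ γ i)
          = G s β (i s) γ *
            ((∏ j : Fin (d + 1), if (j : ℕ) ≤ (s : ℕ) + 1 then (ρ j : ℝ) else 1)
              * Rmat G s.succ γ i) := by ring
        _ = G s β (i s) γ *
            ((ρ s.succ : ℝ) * ∑ α : ∀ j : Fin (d + 1), Fin (ρ j),
              (if α s.succ = γ then (1:ℝ) else 0) * Pge' α) := by rw [h2]
    rw [hLHS]
    -- RHS computation
    have hsplit : ∀ α : ∀ j : Fin (d + 1), Fin (ρ j),
        (∏ j : Fin d, (if (s : ℕ) ≤ (j : ℕ) then G j (α j.castSucc) (i j) (α j.succ) else 1))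
          = G s (α s.castSucc) (i s) (α s.succ) * Pge' α := by
      intro α
      exact prod_ge_split s (fun j => G j (α j.castSucc) (i j) (α j.succ))
    have hstep2 : ∀ α : ∀ j : Fin (d + 1), Fin (ρ j),
        (if α s.castSucc = β then (1:ℝ) else 0)
            * (G s (α s.castSucc) (i s) (α s.succ) * Pge' α)
          = ∑ γ, G s β (i s) γ *
              ((if α s.castSucc = β then (1:ℝ) else 0)
                * ((if α s.succ = γ then (1:ℝ) else 0) * Pge' α)) := by
      intro α
      by_cases h1 : α s.castSucc = β
      · rw [h1]
        simp only [if_true, one_mul]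
        have e2 : ∀ γ : Fin (ρ s.succ),
            G s β (i s) γ * ((if α s.succ = γ then (1:ℝ) else 0) * Pge' α)
              = (if α s.succ = γ then G s β (i s) γ * Pge' α else 0) := by
          intro γ
          by_cases h : α s.succ = γ <;> simp [h]
        rw [Finset.sum_congr rfl fun γ _ => e2 γ,
          Finset.sum_ite_eq Finset.univ (α s.succ) (fun γ => G s β (i s) γ * Pge' α)]
        simp
      · simp [h1]
    have hcomm : ∑ α : ∀ j : Fin (d + 1), Fin (ρ j),
        ∑ γ, G s β (i s) γ *
              ((if α s.castSucc = β then (1:ℝ) else 0)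
                * ((if α s.succ = γ then (1:ℝ) else 0) * Pge' α))
        = ∑ γ, G s β (i s) γ * ∑ α : ∀ j : Fin (d + 1), Fin (ρ j),
              ((if α s.castSucc = β then (1:ℝ) else 0)
                * ((if α s.succ = γ then (1:ℝ) else 0) * Pge' α)) := by
      rw [Finset.sum_comm]
      exact Finset.sum_congr rfl fun γ _ => by rw [Finset.mul_sum]
    have hkey : ∀ γ : Fin (ρ s.succ),
        (ρ s.castSucc : ℝ) * ∑ α : ∀ j : Fin (d + 1), Fin (ρ j),
            ((if α s.castSucc = β then (1:ℝ) else 0)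
              * ((if α s.succ = γ then (1:ℝ) else 0) * Pge' α))
          = ∑ α : ∀ j : Fin (d + 1), Fin (ρ j),
              (if α s.succ = γ then (1:ℝ) else 0) * Pge' α := by
      intro γ
      have hind : ∀ (α : ∀ j : Fin (d + 1), Fin (ρ j)) (x : Fin (ρ s.castSucc)),
          ((if (Function.update α s.castSucc x) s.succ = γ then (1:ℝ) else 0)
              * Pge' (Function.update α s.castSucc x))
            = (if α s.succ = γ then (1:ℝ) else 0) * Pge' α := by
        intro α x
        have h1 : (Function.update α s.castSucc x) s.succ = α s.succ := by
          apply Function.update_of_ne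
          simp only [ne_eq, Fin.ext_iff, Fin.val_succ, Fin.coe_castSucc]
          omega
        have h2 : Pge' (Function.update α s.castSucc x) = Pge' α := by
          rw [hPge']
          refine Finset.prod_congr rfl fun j _ => ?_
          by_cases hj : (s : ℕ) + 1 ≤ (j : ℕ)
          · rw [if_pos hj, if_pos hj]
            have hc1 : (Function.update α s.castSucc x) j.castSucc = α j.castSucc := by
              apply Function.update_of_ne
              simp only [ne_eq, Fin.ext_iff, Fin.coe_castSucc]
              omega
            have hc2 : (Function.update α s.castSucc x) j.succ = α j.succ := by
              apply Function.update_of_ne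
              simp only [ne_eq, Fin.ext_iff, Fin.val_succ, Fin.coe_castSucc]
              omega
            rw [hc1, hc2]
          · rw [if_neg hj, if_neg hj]
        rw [h1, h2]
      have key := update_sum_aux (β := fun j : Fin (d + 1) => Fin (ρ j)) s.castSucc β
        (fun α => (if α s.succ = γ then (1:ℝ) else 0) * Pge' α) hind
      simp only [Fintype.card_fin] at key
      calc (ρ s.castSucc : ℝ) * ∑ α : ∀ j : Fin (d + 1), Fin (ρ j),
            ((if α s.castSucc = β then (1:ℝ) else 0)
              * ((if α s.succ = γ then (1:ℝ) else 0) * Pge' α))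
          = (ρ s.castSucc : ℝ) * ∑ α : ∀ j : Fin (d + 1), Fin (ρ j),
            (if α s.castSucc = β
              then (if α s.succ = γ then (1:ℝ) else 0) * Pge' α else 0) := by
            congr 1
            refine Finset.sum_congr rfl fun α _ => ?_
            rw [ite_mul, one_mul, zero_mul]
        _ = ∑ α : ∀ j : Fin (d + 1), Fin (ρ j),
              (if α s.succ = γ then (1:ℝ) else 0) * Pge' α := key
    -- assemble RHS
    refine Eq.symm ?_
    calc (ρ s.succ : ℝ) * ((ρ s.castSucc : ℝ) * ∑ α : ∀ j : Fin (d + 1), Fin (ρ j),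
            (if α s.castSucc = β then (1:ℝ) else 0)
              * ∏ j : Fin d,
                  (if (s : ℕ) ≤ (j : ℕ) then G j (α j.castSucc) (i j) (α j.succ) else 1))
        = (ρ s.succ : ℝ) * ((ρ s.castSucc : ℝ) * ∑ α : ∀ j : Fin (d + 1), Fin (ρ j),
            ∑ γ, G s β (i s) γ *
              ((if α s.castSucc = β then (1:ℝ) else 0)
                * ((if α s.succ = γ then (1:ℝ) else 0) * Pge' α))) := by
          rw [Finset.sum_congr rfl fun α _ => by rw [hsplit α, hstep2 α]]
      _ = (ρ s.succ : ℝ) * ((ρ s.castSucc : ℝ) * ∑ γ, G s β (i s) γ *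
            ∑ α : ∀ j : Fin (d + 1), Fin (ρ j),
              ((if α s.castSucc = β then (1:ℝ) else 0)
                * ((if α s.succ = γ then (1:ℝ) else 0) * Pge' α))) := by rw [hcomm]
      _ = ∑ γ, G s β (i s) γ *
            ((ρ s.succ : ℝ) * ((ρ s.castSucc : ℝ) *
              ∑ α : ∀ j : Fin (d + 1), Fin (ρ j),
                ((if α s.castSucc = β then (1:ℝ) else 0)
                  * ((if α s.succ = γ then (1:ℝ) else 0) * Pge' α)))) := by
          rw [Finset.mul_sum, Finset.mul_sum]
          refine Finset.sum_congr rfl fun γ _ => ?_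
          ring
      _ = ∑ γ, G s β (i s) γ *
            ((ρ s.succ : ℝ) * ∑ α : ∀ j : Fin (d + 1), Fin (ρ j),
              (if α s.succ = γ then (1:ℝ) else 0) * Pge' α) := by
          refine Finset.sum_congr rfl fun γ _ => ?_
          rw [hkey γ]

end Path
section Diag

variable {d : ℕ} {n : Fin d → ℕ} {ρ : Fin (d + 1) → ℕ}

lemma diag_eq (hρ0 : ρ 0 = 1) (hρ : ∀ s, 0 < ρ s)
    (G : ∀ s : Fin d, Fin (ρ s.castSucc) → Fin (n s) → Fin (ρ s.succ) → ℝ)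
    (s : Fin (d + 1)) (i : ∀ j : Fin d, Fin (n j)) :
    ∑ β, Lmat G s i β * Rmat G s β i = ttEval n ρ G i := by
  induction s using Fin.induction with
  | zero =>
    have h0 : ∀ β : Fin (ρ 0), Rmat G 0 β i
        = ∑ α : ∀ j : Fin (d + 1), Fin (ρ j),
            (if α 0 = β then (1:ℝ) else 0)
              * ∏ j : Fin d, G j (α j.castSucc) (i j) (α j.succ) := by
      intro β
      have hp := pathR hρ G 0 β i
      simp only [Fin.val_zero, Nat.le_zero, Nat.zero_le, if_true] at hp
      have hpz : (∏ j : Fin (d + 1), if (j : ℕ) = 0 then (ρ j : ℝ) else 1) = (ρ 0 : ℝ) := by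
        have := prod_le_zero (d := d) (fun j => (ρ j : ℝ))
        simpa using this
      rw [hpz] at hp
      have hc : ((ρ 0 : ℕ) : ℝ) = 1 := by rw [hρ0]; norm_num
      rw [hc, one_mul, one_mul] at hp
      exact hp
    have hL : ∀ β : Fin (ρ 0), Lmat G 0 i β = 1 := fun β => rfl
    calc ∑ β, Lmat G 0 i β * Rmat G 0 β i
        = ∑ β, Rmat G 0 β i := by
          refine Finset.sum_congr rfl fun β _ => ?_
          rw [hL β, one_mul]
      _ = ∑ β : Fin (ρ 0), ∑ α : ∀ j : Fin (d + 1), Fin (ρ j),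
            (if α 0 = β then (∏ j : Fin d, G j (α j.castSucc) (i j) (α j.succ)) else 0) := by
          refine Finset.sum_congr rfl fun β _ => ?_
          rw [h0 β]
          refine Finset.sum_congr rfl fun α _ => ?_
          rw [ite_mul, one_mul, zero_mul]
      _ = ∑ α : ∀ j : Fin (d + 1), Fin (ρ j), ∏ j : Fin d, G j (α j.castSucc) (i j) (α j.succ) :=
          sum_indicator_coord (β := fun j : Fin (d + 1) => Fin (ρ j)) (0 : Fin (d + 1))
            (fun α => ∏ j : Fin d, G j (α j.castSucc) (i j) (α j.succ))
      _ = ttEval n ρ G i := rfl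
  | succ s ih =>
    rw [← ih]
    calc ∑ α, Lmat G s.succ i α * Rmat G s.succ α i
        = ∑ α, ∑ β, Lmat G s.castSucc i β * G s β (i s) α * Rmat G s.succ α i := by
          refine Finset.sum_congr rfl fun α _ => ?_
          rw [Lmat_succ, Finset.sum_mul]
      _ = ∑ β, ∑ α, Lmat G s.castSucc i β * G s β (i s) α * Rmat G s.succ α i :=
          Finset.sum_comm
      _ = ∑ β, Lmat G s.castSucc i β * ∑ α, G s β (i s) α * Rmat G s.succ α i := by
          refine Finset.sum_congr rfl fun β _ => ?_
          rw [Finset.mul_sum]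
          refine Finset.sum_congr rfl fun α _ => ?_
          ring
      _ = ∑ β, Lmat G s.castSucc i β * Rmat G s.castSucc β i := by
          refine Finset.sum_congr rfl fun β _ => ?_
          rw [Rmat_castSucc]

lemma mix_eq (hρ0 : ρ 0 = 1) (hρ : ∀ s, 0 < ρ s)
    {G G' : ∀ s : Fin d, Fin (ρ s.castSucc) → Fin (n s) → Fin (ρ s.succ) → ℝ}
    (hGG' : ttEval n ρ G = ttEval n ρ G') (s : Fin (d + 1))
    (i i' : ∀ j : Fin d, Fin (n j)) :
    ∑ β, Lmat G s i β * Rmat G s β i' = ∑ β, Lmat G' s i β * Rmat G' s β i' := by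
  set h : ∀ j : Fin d, Fin (n j) := fun j => if (j : ℕ) < (s : ℕ) then i j else i' j with hh
  have hL : ∀ (F : ∀ s : Fin d, Fin (ρ s.castSucc) → Fin (n s) → Fin (ρ s.succ) → ℝ),
      Lmat F s i = Lmat F s h := by
    intro F
    apply Lmat_ext
    intro j hj
    rw [hh]
    simp only [if_pos hj]
  have hR : ∀ (F : ∀ s : Fin d, Fin (ρ s.castSucc) → Fin (n s) → Fin (ρ s.succ) → ℝ)
      (β : Fin (ρ s)), Rmat F s β i' = Rmat F s β h := by
    intro F β
    apply Rmat_ext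
    intro j hj
    rw [hh]
    simp only [if_neg (not_lt.mpr hj)]
  calc ∑ β, Lmat G s i β * Rmat G s β i'
      = ∑ β, Lmat G s h β * Rmat G s β h := by
        refine Finset.sum_congr rfl fun β _ => ?_
        rw [hL G, hR G β]
    _ = ttEval n ρ G h := diag_eq hρ0 hρ G s h
    _ = ttEval n ρ G' h := by rw [hGG']
    _ = ∑ β, Lmat G' s h β * Rmat G' s β h := (diag_eq hρ0 hρ G' s h).symm
    _ = ∑ β, Lmat G' s i β * Rmat G' s β i' := by
        refine Finset.sum_congr rfl fun β _ => ?_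
        rw [hL G', hR G' β]

lemma mix_eq_matrix (hρ0 : ρ 0 = 1) (hρ : ∀ s, 0 < ρ s)
    {G G' : ∀ s : Fin d, Fin (ρ s.castSucc) → Fin (n s) → Fin (ρ s.succ) → ℝ}
    (hGG' : ttEval n ρ G = ttEval n ρ G') (s : Fin (d + 1)) :
    Lmat G s * Rmat G s = Lmat G' s * Rmat G' s := by
  ext i i'
  rw [Matrix.mul_apply, Matrix.mul_apply]
  exact mix_eq hρ0 hρ hGG' s i i'

end Diag
section Inj

variable {d : ℕ} {n : Fin d → ℕ} {ρ : Fin (d + 1) → ℕ}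

lemma Lmat_mulVec_rec (G : ∀ s : Fin d, Fin (ρ s.castSucc) → Fin (n s) → Fin (ρ s.succ) → ℝ)
    (s : Fin d) (u : Fin (ρ s.succ) → ℝ) (i : ∀ j : Fin d, Fin (n j)) :
    (Lmat G s.succ).mulVec u i
      = ∑ β, Lmat G s.castSucc i β * ∑ α, G s β (i s) α * u α := by
  simp only [Matrix.mulVec, dotProduct]
  calc ∑ α, Lmat G s.succ i α * u α
      = ∑ α, ∑ β, Lmat G s.castSucc i β * G s β (i s) α * u α := by
        refine Finset.sum_congr rfl fun α _ => ?_
        rw [Lmat_succ, Finset.sum_mul]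
    _ = ∑ β, ∑ α, Lmat G s.castSucc i β * G s β (i s) α * u α := Finset.sum_comm
    _ = ∑ β, Lmat G s.castSucc i β * ∑ α, G s β (i s) α * u α := by
        refine Finset.sum_congr rfl fun β _ => ?_
        rw [Finset.mul_sum]
        exact Finset.sum_congr rfl fun α _ => by ring

lemma Rmat_vecMul_rec (G : ∀ s : Fin d, Fin (ρ s.castSucc) → Fin (n s) → Fin (ρ s.succ) → ℝ)
    (s : Fin d) (u : Fin (ρ s.castSucc) → ℝ) (i : ∀ j : Fin d, Fin (n j)) :
    Matrix.vecMul u (Rmat G s.castSucc) i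
      = ∑ γ, (∑ β, u β * G s β (i s) γ) * Rmat G s.succ γ i := by
  simp only [Matrix.vecMul, dotProduct]
  calc ∑ β, u β * Rmat G s.castSucc β i
      = ∑ β, ∑ γ, u β * G s β (i s) γ * Rmat G s.succ γ i := by
        refine Finset.sum_congr rfl fun β _ => ?_
        rw [Rmat_castSucc, Finset.mul_sum]
        exact Finset.sum_congr rfl fun γ _ => by ring
    _ = ∑ γ, ∑ β, u β * G s β (i s) γ * Rmat G s.succ γ i := Finset.sum_comm
    _ = ∑ γ, (∑ β, u β * G s β (i s) γ) * Rmat G s.succ γ i := by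
        refine Finset.sum_congr rfl fun γ _ => ?_
        rw [Finset.sum_mul]

lemma Lmat_inj (hρ0 : ρ 0 = 1) (hn : ∀ j, 0 < n j)
    {G : ∀ s : Fin d, Fin (ρ s.castSucc) → Fin (n s) → Fin (ρ s.succ) → ℝ}
    (hmin : MinimalTT G) (s : Fin (d + 1)) :
    Function.Injective (Lmat G s).mulVec := by
  induction s using Fin.induction with
  | zero =>
    intro v w hvw
    have hss : Subsingleton (Fin (ρ 0)) := by rw [hρ0]; infer_instance
    have i0 : ∀ j : Fin d, Fin (n j) := fun j => ⟨0, hn j⟩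
    have h1 := congrFun hvw i0
    simp only [Matrix.mulVec, dotProduct] at h1
    have hL : ∀ β : Fin (ρ 0), Lmat G 0 i0 β = 1 := fun β => rfl
    simp only [hL, one_mul] at h1
    funext β
    calc v β = ∑ x, v x := (by haveI := hss; exact (Fintype.sum_subsingleton v β).symm)
      _ = ∑ x, w x := h1
      _ = w β := by haveI := hss; exact Fintype.sum_subsingleton w β
  | succ s ih =>
    intro v w hvw
    have hinjU := mulVec_inj_of_rank (leftUnf (G s)) (hmin s).1
    have hW : ∀ x : Fin (n s),
        (fun β => ∑ α, G s β x α * v α) = (fun β => ∑ α, G s β x α * w α) := by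
      intro x
      apply ih
      funext i
      have h1 := congrFun hvw (Function.update i s x)
      rw [Lmat_mulVec_rec, Lmat_mulVec_rec] at h1
      simp only [Function.update_self] at h1
      rw [Lmat_update G s.castSucc i s x (by simp)] at h1
      simp only [Matrix.mulVec, dotProduct]
      exact h1
    apply hinjU
    funext p
    obtain ⟨x, β⟩ := p
    simp only [Matrix.mulVec, dotProduct, leftUnf]
    exact congrFun (hW x) β

lemma Rmat_inj (hρd : ρ (Fin.last d) = 1) (hn : ∀ j, 0 < n j)
    {G : ∀ s : Fin d, Fin (ρ s.castSucc) → Fin (n s) → Fin (ρ s.succ) → ℝ}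
    (hmin : MinimalTT G) (s : Fin (d + 1)) :
    Function.Injective (fun v : Fin (ρ s) → ℝ => Matrix.vecMul v (Rmat G s)) := by
  induction s using Fin.reverseInduction with
  | last =>
    intro v w hvw
    have hss : Subsingleton (Fin (ρ (Fin.last d))) := by rw [hρd]; infer_instance
    have i0 : ∀ j : Fin d, Fin (n j) := fun j => ⟨0, hn j⟩
    have h1 := congrFun hvw i0
    simp only [Matrix.vecMul, dotProduct] at h1
    simp only [Rmat_last, mul_one] at h1
    funext β
    calc v β = ∑ x, v x := (by haveI := hss; exact (Fintype.sum_subsingleton v β).symm)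
      _ = ∑ x, w x := h1
      _ = w β := by haveI := hss; exact Fintype.sum_subsingleton w β
  | cast s ih =>
    intro v w hvw
    have hinjV := vecMul_inj_of_rank (rightUnf (G s)) (hmin s).2
    have hW : ∀ x : Fin (n s),
        (fun γ => ∑ β, v β * G s β x γ) = (fun γ => ∑ β, w β * G s β x γ) := by
      intro x
      apply ih
      funext i
      have h1 := congrFun hvw (Function.update i s x)
      dsimp only at h1 ⊢
      rw [Rmat_vecMul_rec, Rmat_vecMul_rec] at h1
      simp only [Function.update_self] at h1
      have hru : ∀ γ : Fin (ρ s.succ),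
          Rmat G s.succ γ (Function.update i s x) = Rmat G s.succ γ i := fun γ =>
        Rmat_update G s.succ i s x (by simp) γ
      simp only [hru] at h1
      simp only [Matrix.vecMul, dotProduct]
      calc ∑ γ, (∑ β, v β * G s β x γ) * Rmat G s.succ γ i
          = ∑ γ, (∑ β, w β * G s β x γ) * Rmat G s.succ γ i := h1
        _ = ∑ γ, (fun γ => ∑ β, w β * G s β x γ) γ * Rmat G s.succ γ i := rfl
    apply hinjV
    funext p
    obtain ⟨x, γ⟩ := p
    dsimp only
    simp only [Matrix.vecMul, dotProduct, rightUnf]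
    exact congrFun (hW x) γ

end Inj
section Gram

variable {d : ℕ} {n : Fin d → ℕ} {ρ : Fin (d + 1) → ℕ}

lemma prod_lt_split (s : Fin d) (g : Fin d → ℝ) :
    ∏ j : Fin d, (if (j : ℕ) < (s : ℕ) + 1 then g j else 1)
      = (∏ j : Fin d, (if (j : ℕ) < (s : ℕ) then g j else 1)) * g s := by
  have h : ∀ j : Fin d, (if (j : ℕ) < (s : ℕ) + 1 then g j else 1)
      = (if (j : ℕ) < (s : ℕ) then g j else 1) * (if j = s then g j else 1) := by
    intro j
    rcases eq_or_ne j s with rfl | hne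
    · simp
    · have hv : (j : ℕ) ≠ (s : ℕ) := fun hc => hne (Fin.ext hc)
      by_cases hlt : (j : ℕ) < (s : ℕ)
      · rw [if_pos (by omega), if_pos hlt, if_neg hne, mul_one]
      · rw [if_neg (by omega), if_neg hlt, if_neg hne, mul_one]
  rw [Finset.prod_congr rfl (fun j _ => h j), Finset.prod_mul_distrib, Finset.prod_ite_eq']
  simp

lemma Lmat_gram (hρ0 : ρ 0 = 1) (hn : ∀ j, 0 < n j)
    (G : ∀ s : Fin d, Fin (ρ s.castSucc) → Fin (n s) → Fin (ρ s.succ) → ℝ) (s : Fin (d + 1))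
    (horth : ∀ j : Fin d, (j : ℕ) < (s : ℕ) → LeftOrth (G j)) :
    ∀ β γ : Fin (ρ s), ∑ i, Lmat G s i β * Lmat G s i γ
      = (∏ j : Fin d, if (s : ℕ) ≤ (j : ℕ) then (n j : ℝ) else 1)
          * (if β = γ then 1 else 0) := by
  induction s using Fin.induction with
  | zero =>
    intro β γ
    have hss : Subsingleton (Fin (ρ 0)) := by rw [hρ0]; infer_instance
    rw [if_pos (Subsingleton.elim β γ)]
    have hL : ∀ (i : ∀ j : Fin d, Fin (n j)) (b : Fin (ρ 0)), Lmat G 0 i b = 1 :=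
      fun i b => rfl
    simp only [hL, one_mul, mul_one]
    rw [Finset.sum_const, nsmul_eq_mul, mul_one, Finset.card_univ, Fintype.card_pi]
    simp
  | succ s ih =>
    intro α α'
    have horth' : ∀ j : Fin d, (j : ℕ) < ((s.castSucc : Fin (d + 1)) : ℕ) → LeftOrth (G j) :=
      fun j hj => horth j (by simp only [Fin.coe_castSucc] at hj; simp only [Fin.val_succ]; omega)
    have ihg := ih horth'
    have hnne : ((n s : ℕ) : ℝ) ≠ 0 := Nat.cast_ne_zero.mpr (hn s).ne'
    apply mul_left_cancel₀ hnne
    have hLO : (leftUnf (G s))ᵀ * leftUnf (G s) = 1 := horth s (by simp)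
    have expand : ∑ i, Lmat G s.succ i α * Lmat G s.succ i α'
        = ∑ β, ∑ β', ∑ i, (Lmat G s.castSucc i β * Lmat G s.castSucc i β')
            * (G s β (i s) α * G s β' (i s) α') := by
      calc ∑ i, Lmat G s.succ i α * Lmat G s.succ i α'
          = ∑ i, ∑ β, ∑ β', (Lmat G s.castSucc i β * Lmat G s.castSucc i β')
              * (G s β (i s) α * G s β' (i s) α') := by
            refine Finset.sum_congr rfl fun i _ => ?_
            rw [Lmat_succ, Lmat_succ, Finset.sum_mul_sum]
            refine Finset.sum_congr rfl fun β _ => ?_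
            refine Finset.sum_congr rfl fun β' _ => ?_
            ring
        _ = ∑ β, ∑ i, ∑ β', (Lmat G s.castSucc i β * Lmat G s.castSucc i β')
              * (G s β (i s) α * G s β' (i s) α') := Finset.sum_comm
        _ = ∑ β, ∑ β', ∑ i, (Lmat G s.castSucc i β * Lmat G s.castSucc i β')
              * (G s β (i s) α * G s β' (i s) α') := by
            exact Finset.sum_congr rfl fun β _ => Finset.sum_comm
    have inner : ∀ β β' : Fin (ρ s.castSucc),
        (n s : ℝ) * ∑ i, (Lmat G s.castSucc i β * Lmat G s.castSucc i β')
            * (G s β (i s) α * G s β' (i s) α')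
          = (∑ x, G s β x α * G s β' x α')
              * ((∏ j : Fin d, if ((s.castSucc : Fin (d+1)) : ℕ) ≤ (j : ℕ) then (n j : ℝ) else 1)
                  * (if β = β' then 1 else 0)) := by
      intro β β'
      have hu : ∀ (i : ∀ j : Fin d, Fin (n j)) (x : Fin (n s)),
          (Lmat G s.castSucc (Function.update i s x) β
              * Lmat G s.castSucc (Function.update i s x) β')
            = Lmat G s.castSucc i β * Lmat G s.castSucc i β' := by
        intro i x
        rw [Lmat_update G s.castSucc i s x (by simp)]
      have key := coord_factor_aux (β := fun j : Fin d => Fin (n j)) s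
        (fun i => Lmat G s.castSucc i β * Lmat G s.castSucc i β')
        (fun x => G s β x α * G s β' x α') hu
      simp only [Fintype.card_fin] at key
      rw [key, ihg β β']
    have hsum : (n s : ℝ) * ∑ i, Lmat G s.succ i α * Lmat G s.succ i α'
        = (∏ j : Fin d, if ((s.castSucc : Fin (d+1)) : ℕ) ≤ (j : ℕ) then (n j : ℝ) else 1)
            * ∑ β, (∑ x, G s β x α * G s β x α') := by
      rw [expand, Finset.mul_sum]
      have t1 : ∀ β : Fin (ρ s.castSucc), (n s : ℝ) * ∑ β', ∑ i,
          Lmat G s.castSucc i β * Lmat G s.castSucc i β' * (G s β (i s) α * G s β' (i s) α')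
          = ∑ β', (n s : ℝ) * ∑ i,
          Lmat G s.castSucc i β * Lmat G s.castSucc i β' * (G s β (i s) α * G s β' (i s) α') :=
        fun β => Finset.mul_sum _ _ _
      rw [Finset.sum_congr rfl fun β _ => t1 β]
      rw [Finset.sum_congr rfl fun β _ => Finset.sum_congr rfl fun β' _ => inner β β']
      rw [Finset.mul_sum]
      refine Finset.sum_congr rfl fun β _ => ?_
      have : ∀ β' : Fin (ρ s.castSucc), (∑ x, G s β x α * G s β' x α')
          * ((∏ j : Fin d, if ((s.castSucc : Fin (d+1)) : ℕ) ≤ (j : ℕ) then (n j : ℝ) else 1)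
              * (if β = β' then 1 else 0))
          = (if β = β' then (∏ j : Fin d, if ((s.castSucc : Fin (d+1)) : ℕ) ≤ (j : ℕ)
              then (n j : ℝ) else 1) * (∑ x, G s β x α * G s β' x α') else 0) := by
        intro β'
        by_cases h : β = β' <;> simp [h] <;> ring
      rw [Finset.sum_congr rfl fun β' _ => this β']
      rw [Finset.sum_ite_eq Finset.univ β]
      simp
    have hGO : ∑ β, (∑ x, G s β x α * G s β x α') = (if α = α' then (1:ℝ) else 0) := by
      have := congrFun (congrFun hLO α) α'
      simp only [Matrix.mul_apply, Matrix.transpose_apply, Matrix.one_apply] at this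
      rw [← this]
      rw [Fintype.sum_prod_type]
      rw [Finset.sum_comm]
      refine Finset.sum_congr rfl fun β _ => ?_
      refine Finset.sum_congr rfl fun x _ => ?_
      simp [leftUnf]
    rw [hsum, hGO]
    have hprod : (∏ j : Fin d, if ((s.castSucc : Fin (d+1)) : ℕ) ≤ (j : ℕ) then (n j : ℝ) else 1)
        = (n s : ℝ) * (∏ j : Fin d, if ((s.succ : Fin (d+1)) : ℕ) ≤ (j : ℕ) then (n j : ℝ) else 1) := by
      simp only [Fin.coe_castSucc, Fin.val_succ]
      exact prod_ge_split s (fun j => (n j : ℝ))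
    rw [hprod]
    ring

lemma Rmat_gram (hρd : ρ (Fin.last d) = 1) (hn : ∀ j, 0 < n j)
    (G : ∀ s : Fin d, Fin (ρ s.castSucc) → Fin (n s) → Fin (ρ s.succ) → ℝ) (s : Fin (d + 1))
    (horth : ∀ j : Fin d, (s : ℕ) ≤ (j : ℕ) → RightOrth (G j)) :
    ∀ β γ : Fin (ρ s), ∑ i, Rmat G s β i * Rmat G s γ i
      = (∏ j : Fin d, if (j : ℕ) < (s : ℕ) then (n j : ℝ) else 1)
          * (if β = γ then 1 else 0) := by
  induction s using Fin.reverseInduction with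
  | last =>
    intro β γ
    have hss : Subsingleton (Fin (ρ (Fin.last d))) := by rw [hρd]; infer_instance
    rw [if_pos (Subsingleton.elim β γ)]
    simp only [Rmat_last, one_mul, mul_one]
    rw [Finset.sum_const, nsmul_eq_mul, mul_one, Finset.card_univ, Fintype.card_pi]
    have : ∀ j : Fin d, (if (j : ℕ) < ((Fin.last d : Fin (d + 1)) : ℕ) then (n j : ℝ) else 1)
        = (n j : ℝ) := by
      intro j
      rw [if_pos]
      simp only [Fin.val_last]
      omega
    rw [Finset.prod_congr rfl fun j _ => this j]
    simp
  | cast s ih =>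
    intro β β'
    have horth' : ∀ j : Fin d, ((s.succ : Fin (d + 1)) : ℕ) ≤ (j : ℕ) → RightOrth (G j) :=
      fun j hj => horth j (by simp only [Fin.val_succ] at hj; simp only [Fin.coe_castSucc]; omega)
    have ihg := ih horth'
    have hnne : ((n s : ℕ) : ℝ) ≠ 0 := Nat.cast_ne_zero.mpr (hn s).ne'
    apply mul_left_cancel₀ hnne
    have hRO : rightUnf (G s) * (rightUnf (G s))ᵀ = 1 := horth s (by simp)
    have expand : ∑ i, Rmat G s.castSucc β i * Rmat G s.castSucc β' i
        = ∑ γ, ∑ γ', ∑ i, (Rmat G s.succ γ i * Rmat G s.succ γ' i)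
            * (G s β (i s) γ * G s β' (i s) γ') := by
      calc ∑ i, Rmat G s.castSucc β i * Rmat G s.castSucc β' i
          = ∑ i, ∑ γ, ∑ γ', (Rmat G s.succ γ i * Rmat G s.succ γ' i)
              * (G s β (i s) γ * G s β' (i s) γ') := by
            refine Finset.sum_congr rfl fun i _ => ?_
            rw [Rmat_castSucc, Rmat_castSucc, Finset.sum_mul_sum]
            refine Finset.sum_congr rfl fun γ _ => ?_
            refine Finset.sum_congr rfl fun γ' _ => ?_
            ring
        _ = ∑ γ, ∑ i, ∑ γ', (Rmat G s.succ γ i * Rmat G s.succ γ' i)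
              * (G s β (i s) γ * G s β' (i s) γ') := Finset.sum_comm
        _ = ∑ γ, ∑ γ', ∑ i, (Rmat G s.succ γ i * Rmat G s.succ γ' i)
              * (G s β (i s) γ * G s β' (i s) γ') := by
            exact Finset.sum_congr rfl fun γ _ => Finset.sum_comm
    have inner : ∀ γ γ' : Fin (ρ s.succ),
        (n s : ℝ) * ∑ i, (Rmat G s.succ γ i * Rmat G s.succ γ' i)
            * (G s β (i s) γ * G s β' (i s) γ')
          = (∑ x, G s β x γ * G s β' x γ')
              * ((∏ j : Fin d, if (j : ℕ) < ((s.succ : Fin (d+1)) : ℕ) then (n j : ℝ) else 1)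
                  * (if γ = γ' then 1 else 0)) := by
      intro γ γ'
      have hu : ∀ (i : ∀ j : Fin d, Fin (n j)) (x : Fin (n s)),
          (Rmat G s.succ γ (Function.update i s x) * Rmat G s.succ γ' (Function.update i s x))
            = Rmat G s.succ γ i * Rmat G s.succ γ' i := by
        intro i x
        rw [Rmat_update G s.succ i s x (by simp) γ, Rmat_update G s.succ i s x (by simp) γ']
      have key := coord_factor_aux (β := fun j : Fin d => Fin (n j)) s
        (fun i => Rmat G s.succ γ i * Rmat G s.succ γ' i)
        (fun x => G s β x γ * G s β' x γ') hu
      simp only [Fintype.card_fin] at key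
      rw [key, ihg γ γ']
    have hsum : (n s : ℝ) * ∑ i, Rmat G s.castSucc β i * Rmat G s.castSucc β' i
        = (∏ j : Fin d, if (j : ℕ) < ((s.succ : Fin (d+1)) : ℕ) then (n j : ℝ) else 1)
            * ∑ γ, (∑ x, G s β x γ * G s β' x γ) := by
      rw [expand, Finset.mul_sum]
      have t1 : ∀ γ : Fin (ρ s.succ), (n s : ℝ) * ∑ γ', ∑ i,
          Rmat G s.succ γ i * Rmat G s.succ γ' i * (G s β (i s) γ * G s β' (i s) γ')
          = ∑ γ', (n s : ℝ) * ∑ i,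
          Rmat G s.succ γ i * Rmat G s.succ γ' i * (G s β (i s) γ * G s β' (i s) γ') :=
        fun γ => Finset.mul_sum _ _ _
      rw [Finset.sum_congr rfl fun γ _ => t1 γ]
      rw [Finset.sum_congr rfl fun γ _ => Finset.sum_congr rfl fun γ' _ => inner γ γ']
      rw [Finset.mul_sum]
      refine Finset.sum_congr rfl fun γ _ => ?_
      have : ∀ γ' : Fin (ρ s.succ), (∑ x, G s β x γ * G s β' x γ')
          * ((∏ j : Fin d, if (j : ℕ) < ((s.succ : Fin (d+1)) : ℕ) then (n j : ℝ) else 1)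
              * (if γ = γ' then 1 else 0))
          = (if γ = γ' then (∏ j : Fin d, if (j : ℕ) < ((s.succ : Fin (d+1)) : ℕ)
              then (n j : ℝ) else 1) * (∑ x, G s β x γ * G s β' x γ') else 0) := by
        intro γ'
        by_cases h : γ = γ' <;> simp [h] <;> ring
      rw [Finset.sum_congr rfl fun γ' _ => this γ']
      rw [Finset.sum_ite_eq Finset.univ γ]
      simp
    have hGO : ∑ γ, (∑ x, G s β x γ * G s β' x γ) = (if β = β' then (1:ℝ) else 0) := by
      have := congrFun (congrFun hRO β) β'
      simp only [Matrix.mul_apply, Matrix.transpose_apply, Matrix.one_apply] at this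
      rw [← this]
      rw [Fintype.sum_prod_type]
      rw [Finset.sum_comm]
      refine Finset.sum_congr rfl fun γ _ => ?_
      refine Finset.sum_congr rfl fun x _ => ?_
      simp [rightUnf]
    rw [hsum, hGO]
    have hprod : (∏ j : Fin d, if (j : ℕ) < ((s.succ : Fin (d+1)) : ℕ) then (n j : ℝ) else 1)
        = (∏ j : Fin d, if (j : ℕ) < ((s.castSucc : Fin (d+1)) : ℕ) then (n j : ℝ) else 1)
            * (n s : ℝ) := by
      simp only [Fin.coe_castSucc, Fin.val_succ]
      exact prod_lt_split s (fun j => (n j : ℝ))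
    rw [hprod]
    ring

end Gram
section Factor

variable {d : ℕ} {n : Fin d → ℕ} {ρ : Fin (d + 1) → ℕ}

lemma Lmat_gram_mat (hρ0 : ρ 0 = 1) (hn : ∀ j, 0 < n j)
    (G : ∀ s : Fin d, Fin (ρ s.castSucc) → Fin (n s) → Fin (ρ s.succ) → ℝ) (s : Fin (d + 1))
    (horth : ∀ j : Fin d, (j : ℕ) < (s : ℕ) → LeftOrth (G j)) :
    (Lmat G s)ᵀ * Lmat G s
      = (∏ j : Fin d, if (s : ℕ) ≤ (j : ℕ) then (n j : ℝ) else 1)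
          • (1 : Matrix (Fin (ρ s)) (Fin (ρ s)) ℝ) := by
  ext β γ
  rw [Matrix.mul_apply]
  simp only [Matrix.transpose_apply, Matrix.smul_apply, Matrix.one_apply, smul_eq_mul]
  rw [Lmat_gram hρ0 hn G s horth β γ]

lemma Rmat_gram_mat (hρd : ρ (Fin.last d) = 1) (hn : ∀ j, 0 < n j)
    (G : ∀ s : Fin d, Fin (ρ s.castSucc) → Fin (n s) → Fin (ρ s.succ) → ℝ) (s : Fin (d + 1))
    (horth : ∀ j : Fin d, (s : ℕ) ≤ (j : ℕ) → RightOrth (G j)) :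
    Rmat G s * (Rmat G s)ᵀ
      = (∏ j : Fin d, if (j : ℕ) < (s : ℕ) then (n j : ℝ) else 1)
          • (1 : Matrix (Fin (ρ s)) (Fin (ρ s)) ℝ) := by
  ext β γ
  rw [Matrix.mul_apply]
  simp only [Matrix.transpose_apply, Matrix.smul_apply, Matrix.one_apply, smul_eq_mul]
  rw [Rmat_gram hρd hn G s horth β γ]

lemma exists_transfer_L (hρ0 : ρ 0 = 1) (hρd : ρ (Fin.last d) = 1)
    (hρ : ∀ s, 0 < ρ s) (hn : ∀ j, 0 < n j)
    {T U : ∀ s : Fin d, Fin (ρ s.castSucc) → Fin (n s) → Fin (ρ s.succ) → ℝ}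
    (hUT : ttEval n ρ U = ttEval n ρ T) (hTmin : MinimalTT T) (s : Fin (d + 1)) :
    ∃ M : Matrix (Fin (ρ s)) (Fin (ρ s)) ℝ, Lmat T s = Lmat U s * M := by
  obtain ⟨B, hB1, hB2⟩ := exists_inv_of_gram (Rmat T s) (Rmat_inj hρd hn hTmin s)
  have hE : Lmat U s * Rmat U s = Lmat T s * Rmat T s := mix_eq_matrix hρ0 hρ hUT s
  refine ⟨Rmat U s * (Rmat T s)ᵀ * B, ?_⟩
  calc Lmat T s = Lmat T s * ((Rmat T s * (Rmat T s)ᵀ) * B) := by rw [hB1, Matrix.mul_one]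
    _ = Lmat T s * Rmat T s * (Rmat T s)ᵀ * B := by
        rw [Matrix.mul_assoc (Rmat T s), ← Matrix.mul_assoc, ← Matrix.mul_assoc]
    _ = Lmat U s * Rmat U s * (Rmat T s)ᵀ * B := by rw [hE]
    _ = Lmat U s * (Rmat U s * (Rmat T s)ᵀ * B) := by
        rw [Matrix.mul_assoc, Matrix.mul_assoc, Matrix.mul_assoc]

lemma exists_transfer_R (hρ0 : ρ 0 = 1)
    (hρ : ∀ s, 0 < ρ s) (hn : ∀ j, 0 < n j)
    {T V : ∀ s : Fin d, Fin (ρ s.castSucc) → Fin (n s) → Fin (ρ s.succ) → ℝ}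
    (hVT : ttEval n ρ V = ttEval n ρ T) (hTmin : MinimalTT T) (s : Fin (d + 1)) :
    ∃ K : Matrix (Fin (ρ s)) (Fin (ρ s)) ℝ, Rmat T s = K * Rmat V s := by
  have hLinj := Lmat_inj hρ0 hn hTmin s
  have hTinj : Function.Injective (fun v => Matrix.vecMul v (Lmat T s)ᵀ) := by
    intro v w hvw
    apply hLinj
    rw [← Matrix.vecMul_transpose, ← Matrix.vecMul_transpose]
    exact hvw
  obtain ⟨B, hB1, hB2⟩ := exists_inv_of_gram (Lmat T s)ᵀ hTinj
  rw [Matrix.transpose_transpose] at hB1 hB2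
  have hE : Lmat V s * Rmat V s = Lmat T s * Rmat T s := mix_eq_matrix hρ0 hρ hVT s
  refine ⟨B * ((Lmat T s)ᵀ * Lmat V s), ?_⟩
  calc Rmat T s = (B * ((Lmat T s)ᵀ * Lmat T s)) * Rmat T s := by rw [hB2, Matrix.one_mul]
    _ = B * ((Lmat T s)ᵀ * (Lmat T s * Rmat T s)) := by
        rw [Matrix.mul_assoc, Matrix.mul_assoc]
    _ = B * ((Lmat T s)ᵀ * (Lmat V s * Rmat V s)) := by rw [hE]
    _ = B * ((Lmat T s)ᵀ * Lmat V s) * Rmat V s := by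
        rw [← Matrix.mul_assoc (Lmat T s)ᵀ, ← Matrix.mul_assoc]

lemma sliceL {T U : ∀ s : Fin d, Fin (ρ s.castSucc) → Fin (n s) → Fin (ρ s.succ) → ℝ}
    (s : Fin d)
    (M1 : Matrix (Fin (ρ s.castSucc)) (Fin (ρ s.castSucc)) ℝ)
    (M2 : Matrix (Fin (ρ s.succ)) (Fin (ρ s.succ)) ℝ)
    (h1 : Lmat T s.castSucc = Lmat U s.castSucc * M1)
    (h2 : Lmat T s.succ = Lmat U s.succ * M2)
    (hinj : Function.Injective (Lmat U s.castSucc).mulVec)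
    (x : Fin (n s)) :
    M1 * Matrix.of (fun β α => T s β x α) = Matrix.of (fun β α => U s β x α) * M2 := by
  ext γ α
  have hvec : (fun γ => ∑ β, M1 γ β * T s β x α) = (fun γ => ∑ α', U s γ x α' * M2 α' α) := by
    apply hinj
    funext i
    simp only [Matrix.mulVec, dotProduct]
    have hupd : Lmat U s.castSucc (Function.update i s x) = Lmat U s.castSucc i :=
      Lmat_update U s.castSucc i s x (by simp)
    have hupdT : Lmat T s.castSucc (Function.update i s x) = Lmat T s.castSucc i :=
      Lmat_update T s.castSucc i s x (by simp)
    calc ∑ γ, Lmat U s.castSucc i γ * ∑ β, M1 γ β * T s β x α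
        = ∑ γ, ∑ β, Lmat U s.castSucc i γ * M1 γ β * T s β x α := by
          refine Finset.sum_congr rfl fun γ _ => ?_
          rw [Finset.mul_sum]
          exact Finset.sum_congr rfl fun β _ => by ring
      _ = ∑ β, ∑ γ, Lmat U s.castSucc i γ * M1 γ β * T s β x α := Finset.sum_comm
      _ = ∑ β, (Lmat U s.castSucc * M1) i β * T s β x α := by
          refine Finset.sum_congr rfl fun β _ => ?_
          rw [Matrix.mul_apply, Finset.sum_mul]
      _ = ∑ β, Lmat T s.castSucc i β * T s β x α := by rw [← h1]
      _ = ∑ β, Lmat T s.castSucc (Function.update i s x) β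
            * T s β ((Function.update i s x) s) α := by
          simp only [Function.update_self, hupdT]
      _ = Lmat T s.succ (Function.update i s x) α := (Lmat_succ T s _ α).symm
      _ = (Lmat U s.succ * M2) (Function.update i s x) α := by rw [h2]
      _ = ∑ α', Lmat U s.succ (Function.update i s x) α' * M2 α' α := Matrix.mul_apply
      _ = ∑ α', (∑ γ, Lmat U s.castSucc i γ * U s γ x α') * M2 α' α := by
          refine Finset.sum_congr rfl fun α' _ => ?_
          rw [Lmat_succ]
          simp only [Function.update_self, hupd]
      _ = ∑ γ, Lmat U s.castSucc i γ * ∑ α', U s γ x α' * M2 α' α := by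
          calc ∑ α', (∑ γ, Lmat U s.castSucc i γ * U s γ x α') * M2 α' α
              = ∑ α', ∑ γ, Lmat U s.castSucc i γ * U s γ x α' * M2 α' α := by
                refine Finset.sum_congr rfl fun α' _ => ?_
                rw [Finset.sum_mul]
            _ = ∑ γ, ∑ α', Lmat U s.castSucc i γ * U s γ x α' * M2 α' α := Finset.sum_comm
            _ = ∑ γ, Lmat U s.castSucc i γ * ∑ α', U s γ x α' * M2 α' α := by
                refine Finset.sum_congr rfl fun γ _ => ?_
                rw [Finset.mul_sum]
                exact Finset.sum_congr rfl fun α' _ => by ring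
  have := congrFun hvec γ
  simpa [Matrix.mul_apply] using this

lemma sliceR {T V : ∀ s : Fin d, Fin (ρ s.castSucc) → Fin (n s) → Fin (ρ s.succ) → ℝ}
    (s : Fin d)
    (K1 : Matrix (Fin (ρ s.castSucc)) (Fin (ρ s.castSucc)) ℝ)
    (K2 : Matrix (Fin (ρ s.succ)) (Fin (ρ s.succ)) ℝ)
    (h1 : Rmat T s.castSucc = K1 * Rmat V s.castSucc)
    (h2 : Rmat T s.succ = K2 * Rmat V s.succ)
    (hinj : Function.Injective (fun v : Fin (ρ s.succ) → ℝ => Matrix.vecMul v (Rmat V s.succ)))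
    (x : Fin (n s)) :
    Matrix.of (fun β γ => T s β x γ) * K2 = K1 * Matrix.of (fun β γ => V s β x γ) := by
  ext β γ0
  have hvec : (fun γ => ∑ γ', T s β x γ' * K2 γ' γ) = (fun γ => ∑ β', K1 β β' * V s β' x γ) := by
    apply hinj
    funext i
    simp only [Matrix.vecMul, dotProduct]
    have hupd : ∀ γ : Fin (ρ s.succ),
        Rmat V s.succ γ (Function.update i s x) = Rmat V s.succ γ i :=
      fun γ => Rmat_update V s.succ i s x (by simp) γ
    have hupdT : ∀ γ : Fin (ρ s.succ),
        Rmat T s.succ γ (Function.update i s x) = Rmat T s.succ γ i :=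
      fun γ => Rmat_update T s.succ i s x (by simp) γ
    calc ∑ γ, (∑ γ', T s β x γ' * K2 γ' γ) * Rmat V s.succ γ i
        = ∑ γ, ∑ γ', T s β x γ' * K2 γ' γ * Rmat V s.succ γ i := by
          refine Finset.sum_congr rfl fun γ _ => ?_
          rw [Finset.sum_mul]
      _ = ∑ γ', ∑ γ, T s β x γ' * K2 γ' γ * Rmat V s.succ γ i := Finset.sum_comm
      _ = ∑ γ', T s β x γ' * (K2 * Rmat V s.succ) γ' i := by
          refine Finset.sum_congr rfl fun γ' _ => ?_
          rw [Matrix.mul_apply, Finset.mul_sum]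
          exact Finset.sum_congr rfl fun γ _ => by ring
      _ = ∑ γ', T s β x γ' * Rmat T s.succ γ' i := by rw [← h2]
      _ = ∑ γ', T s β ((Function.update i s x) s) γ'
            * Rmat T s.succ γ' (Function.update i s x) := by
          simp only [Function.update_self, hupdT]
      _ = Rmat T s.castSucc β (Function.update i s x) := (Rmat_castSucc T s β _).symm
      _ = (K1 * Rmat V s.castSucc) β (Function.update i s x) := by rw [h1]
      _ = ∑ β', K1 β β' * Rmat V s.castSucc β' (Function.update i s x) := Matrix.mul_apply
      _ = ∑ β', K1 β β' * ∑ γ, V s β' x γ * Rmat V s.succ γ i := by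
          refine Finset.sum_congr rfl fun β' _ => ?_
          rw [Rmat_castSucc]
          simp only [Function.update_self, hupd]
      _ = ∑ γ, (∑ β', K1 β β' * V s β' x γ) * Rmat V s.succ γ i := by
          calc ∑ β', K1 β β' * ∑ γ, V s β' x γ * Rmat V s.succ γ i
              = ∑ β', ∑ γ, K1 β β' * V s β' x γ * Rmat V s.succ γ i := by
                refine Finset.sum_congr rfl fun β' _ => ?_
                rw [Finset.mul_sum]
                exact Finset.sum_congr rfl fun γ _ => by ring
            _ = ∑ γ, ∑ β', K1 β β' * V s β' x γ * Rmat V s.succ γ i := Finset.sum_comm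
            _ = ∑ γ, (∑ β', K1 β β' * V s β' x γ) * Rmat V s.succ γ i := by
                refine Finset.sum_congr rfl fun γ _ => ?_
                rw [Finset.sum_mul]
  have := congrFun hvec γ0
  simpa [Matrix.mul_apply] using this

lemma kron_left_entry {N p q : ℕ} (A : Matrix (Fin p) (Fin p) ℝ) (B : Matrix (Fin q) (Fin q) ℝ)
    (C : Fin p → Fin N → Fin q → ℝ) (x : Fin N) (β : Fin p) (α : Fin q) :
    (Matrix.kroneckerMap (· * ·) (1 : Matrix (Fin N) (Fin N) ℝ) A * leftUnf C * B) (x, β) α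
      = ∑ β', ∑ α', A β β' * C β' x α' * B α' α := by
  have inner : ∀ α' : Fin q,
      (Matrix.kroneckerMap (· * ·) (1 : Matrix (Fin N) (Fin N) ℝ) A * leftUnf C) (x, β) α'
        = ∑ β', A β β' * C β' x α' := by
    intro α'
    rw [Matrix.mul_apply, Fintype.sum_prod_type]
    calc ∑ x' : Fin N, ∑ β' : Fin p,
          Matrix.kroneckerMap (· * ·) (1 : Matrix (Fin N) (Fin N) ℝ) A (x, β) (x', β')
            * leftUnf C (x', β') α'
        = ∑ x' : Fin N, (if x = x' then ∑ β', A β β' * C β' x' α' else 0) := by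
          refine Finset.sum_congr rfl fun x' _ => ?_
          by_cases h : x = x'
          · rw [if_pos h]
            refine Finset.sum_congr rfl fun β' _ => ?_
            simp [Matrix.kroneckerMap_apply, Matrix.one_apply, leftUnf, h]
          · rw [if_neg h]
            refine Finset.sum_eq_zero fun β' _ => ?_
            simp [Matrix.kroneckerMap_apply, Matrix.one_apply, leftUnf, h]
      _ = ∑ β', A β β' * C β' x α' := by
          rw [Finset.sum_ite_eq Finset.univ x]
          simp
  rw [Matrix.mul_apply]
  calc ∑ α', (Matrix.kroneckerMap (· * ·) (1 : Matrix (Fin N) (Fin N) ℝ) A * leftUnf C)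
        (x, β) α' * B α' α
      = ∑ α', (∑ β', A β β' * C β' x α') * B α' α :=
        Finset.sum_congr rfl fun α' _ => by rw [inner α']
    _ = ∑ α', ∑ β', A β β' * C β' x α' * B α' α := by
        refine Finset.sum_congr rfl fun α' _ => ?_
        rw [Finset.sum_mul]
    _ = ∑ β', ∑ α', A β β' * C β' x α' * B α' α := Finset.sum_comm

lemma kron_right_entry {N p q : ℕ} (A : Matrix (Fin p) (Fin p) ℝ) (B : Matrix (Fin q) (Fin q) ℝ)
    (C : Fin p → Fin N → Fin q → ℝ) (β : Fin p) (x : Fin N) (γ : Fin q) :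
    (A * rightUnf C * Matrix.kroneckerMap (· * ·) (1 : Matrix (Fin N) (Fin N) ℝ) B) β (x, γ)
      = ∑ β', ∑ γ', A β β' * C β' x γ' * B γ' γ := by
  have inner : ∀ γ' : Fin q, (A * rightUnf C) β (x, γ') = ∑ β', A β β' * C β' x γ' := by
    intro γ'
    rw [Matrix.mul_apply]
    exact Finset.sum_congr rfl fun β' _ => by simp [rightUnf]
  rw [Matrix.mul_apply, Fintype.sum_prod_type]
  calc ∑ x' : Fin N, ∑ γ' : Fin q, (A * rightUnf C) β (x', γ')
        * Matrix.kroneckerMap (· * ·) (1 : Matrix (Fin N) (Fin N) ℝ) B (x', γ') (x, γ)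
      = ∑ x' : Fin N, (if x' = x then ∑ γ', (A * rightUnf C) β (x', γ') * B γ' γ else 0) := by
        refine Finset.sum_congr rfl fun x' _ => ?_
        by_cases h : x' = x
        · rw [if_pos h]
          refine Finset.sum_congr rfl fun γ' _ => ?_
          simp [Matrix.kroneckerMap_apply, Matrix.one_apply, h]
        · rw [if_neg h]
          refine Finset.sum_eq_zero fun γ' _ => ?_
          simp [Matrix.kroneckerMap_apply, Matrix.one_apply, h]
    _ = ∑ γ', (A * rightUnf C) β (x, γ') * B γ' γ := by
        rw [Finset.sum_ite_eq' Finset.univ x]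
        simp
    _ = ∑ γ', (∑ β', A β β' * C β' x γ') * B γ' γ :=
        Finset.sum_congr rfl fun γ' _ => by rw [inner γ']
    _ = ∑ γ', ∑ β', A β β' * C β' x γ' * B γ' γ := by
        refine Finset.sum_congr rfl fun γ' _ => ?_
        rw [Finset.sum_mul]
    _ = ∑ β', ∑ γ', A β β' * C β' x γ' * B γ' γ := Finset.sum_comm

lemma colSpace_mul_inv {γ : Type} [Fintype γ] {a : ℕ} (X : Matrix γ (Fin a) ℝ)
    (E : Matrix (Fin a) (Fin a) ℝ) (E' : Matrix (Fin a) (Fin a) ℝ)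
    (hE : E * E' = 1) (hE' : E' * E = 1) :
    colSpace (X * E) = colSpace X := by
  apply le_antisymm
  · rintro v ⟨u, rfl⟩
    exact ⟨E.mulVec u, by simp [Matrix.mulVecLin_apply, Matrix.mulVec_mulVec]⟩
  · rintro v ⟨u, rfl⟩
    refine ⟨E'.mulVec u, ?_⟩
    simp only [Matrix.mulVecLin_apply, Matrix.mulVec_mulVec]
    rw [Matrix.mul_assoc, hE, Matrix.mul_one]

lemma rowSpace_inv_mul {γ : Type} [Fintype γ] [DecidableEq γ] {a : ℕ}
    (Y : Matrix (Fin a) γ ℝ) (E : Matrix (Fin a) (Fin a) ℝ) (E' : Matrix (Fin a) (Fin a) ℝ)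
    (hE : E * E' = 1) (hE' : E' * E = 1) :
    rowSpace (E * Y) = rowSpace Y := by
  unfold rowSpace
  rw [Matrix.transpose_mul]
  exact colSpace_mul_inv Yᵀ Eᵀ E'ᵀ
    (by rw [← Matrix.transpose_mul, hE', Matrix.transpose_one])
    (by rw [← Matrix.transpose_mul, hE, Matrix.transpose_one])

lemma unfold_left_of_slices {T U : ∀ s : Fin d, Fin (ρ s.castSucc) → Fin (n s) → Fin (ρ s.succ) → ℝ}
    (s : Fin d) (A : Matrix (Fin (ρ s.castSucc)) (Fin (ρ s.castSucc)) ℝ)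
    (B : Matrix (Fin (ρ s.succ)) (Fin (ρ s.succ)) ℝ)
    (h : ∀ x, Matrix.of (fun β α => T s β x α)
      = A * (Matrix.of (fun β α => U s β x α) * B)) :
    leftUnf (T s) = Matrix.kroneckerMap (· * ·) (1 : Matrix (Fin (n s)) (Fin (n s)) ℝ) A
      * leftUnf (U s) * B := by
  ext p α
  obtain ⟨x, β⟩ := p
  rw [kron_left_entry]
  have hent := congrFun (congrFun (h x) β) α
  calc leftUnf (T s) (x, β) α = T s β x α := rfl
    _ = (A * (Matrix.of (fun β α => U s β x α) * B)) β α := hent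
    _ = ∑ β', ∑ α', A β β' * U s β' x α' * B α' α := by
        rw [Matrix.mul_apply]
        refine Finset.sum_congr rfl fun β' _ => ?_
        rw [Matrix.mul_apply, Finset.mul_sum]
        refine Finset.sum_congr rfl fun α' _ => ?_
        show A β β' * (U s β' x α' * B α' α) = _
        ring

lemma unfold_right_of_slices {T V : ∀ s : Fin d, Fin (ρ s.castSucc) → Fin (n s) → Fin (ρ s.succ) → ℝ}
    (s : Fin d) (A : Matrix (Fin (ρ s.castSucc)) (Fin (ρ s.castSucc)) ℝ)
    (B : Matrix (Fin (ρ s.succ)) (Fin (ρ s.succ)) ℝ)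
    (h : ∀ x, Matrix.of (fun β γ => T s β x γ)
      = A * Matrix.of (fun β γ => V s β x γ) * B) :
    rightUnf (T s) = A * rightUnf (V s)
      * Matrix.kroneckerMap (· * ·) (1 : Matrix (Fin (n s)) (Fin (n s)) ℝ) B := by
  ext β p
  obtain ⟨x, γ⟩ := p
  rw [kron_right_entry]
  have hent := congrFun (congrFun (h x) β) γ
  calc rightUnf (T s) β (x, γ) = T s β x γ := rfl
    _ = (A * Matrix.of (fun β γ => V s β x γ) * B) β γ := hent
    _ = ∑ β', ∑ γ', A β β' * V s β' x γ' * B γ' γ := by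
        rw [Matrix.mul_apply]
        calc ∑ γ', (A * Matrix.of (fun β γ => V s β x γ)) β γ' * B γ' γ
            = ∑ γ', (∑ β', A β β' * V s β' x γ') * B γ' γ := by
              refine Finset.sum_congr rfl fun γ' _ => ?_
              rw [Matrix.mul_apply]
              rfl
          _ = ∑ γ', ∑ β', A β β' * V s β' x γ' * B γ' γ := by
              refine Finset.sum_congr rfl fun γ' _ => ?_
              rw [Finset.sum_mul]
          _ = ∑ β', ∑ γ', A β β' * V s β' x γ' * B γ' γ := Finset.sum_comm

end Factor
end TT
namespace TT

/-- Equivalence of minimal `t`-orthogonal TT factorizations: any minimal `t`-orthogonal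
factorization `{T_s}` is obtained from a minimal left-orthogonal `{U_s}` and a minimal
right-orthogonal `{V_s}` factorization by orthogonal transformations `{Q_s}`.
(The index `tf : Fin d` is the 0-based position of the paper's 1-based index `t`.) -/
theorem minimal_t_orthogonal_equivalence (d : ℕ) (hd : 2 ≤ d) (n : Fin d → ℕ)
    (ρ : Fin (d + 1) → ℕ) (hρ0 : ρ 0 = 1) (hρd : ρ (Fin.last d) = 1)
    (A : (∀ s : Fin d, Fin (n s)) → ℝ)
    (U V T : ∀ s : Fin d, Fin (ρ s.castSucc) → Fin (n s) → Fin (ρ s.succ) → ℝ)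
    (t : ℕ) (ht1 : 1 ≤ t) (htd : t ≤ d)
    (hUA : ttEval n ρ U = A) (hVA : ttEval n ρ V = A) (hTA : ttEval n ρ T = A)
    (hUmin : MinimalTT U) (hVmin : MinimalTT V) (hTmin : MinimalTT T)
    (hUorth : TOrth d U) (hVorth : TOrth 1 V) (hTorth : TOrth t T) :
    ∃ Q : ∀ s : Fin (d + 1), Matrix (Fin (ρ s)) (Fin (ρ s)) ℝ,
      (∀ s, (Q s)ᵀ * Q s = 1 ∧ Q s * (Q s)ᵀ = 1) ∧
      Q 0 = 1 ∧ Q (Fin.last d) = 1 ∧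
      (∀ s : Fin d, s.val + 2 ≤ t →
        leftUnf (T s) =
          kroneckerMap (· * ·) (1 : Matrix (Fin (n s)) (Fin (n s)) ℝ) (Q s.castSucc)ᵀ *
            leftUnf (U s) * Q s.succ) ∧
      (∀ s : Fin d, t ≤ s.val →
        rightUnf (T s) =
          (Q s.castSucc)ᵀ * rightUnf (V s) *
            kroneckerMap (· * ·) (1 : Matrix (Fin (n s)) (Fin (n s)) ℝ) (Q s.succ)) ∧
      (∀ tf : Fin d, tf.val + 1 = t →
        (t = d →
          leftUnf (T tf) =
            kroneckerMap (· * ·) (1 : Matrix (Fin (n tf)) (Fin (n tf)) ℝ) (Q tf.castSucc)ᵀ *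
              leftUnf (U tf)) ∧
        (t = 1 →
          rightUnf (T tf) =
            rightUnf (V tf) *
              kroneckerMap (· * ·) (1 : Matrix (Fin (n tf)) (Fin (n tf)) ℝ) (Q tf.succ)) ∧
        (1 < t → t < d →
          colSpace (leftUnf (T tf)) =
            colSpace
              (kroneckerMap (· * ·) (1 : Matrix (Fin (n tf)) (Fin (n tf)) ℝ) (Q tf.castSucc)ᵀ *
                leftUnf (U tf)) ∧
          rowSpace (rightUnf (T tf)) =
            rowSpace
              (rightUnf (V tf) *
                kroneckerMap (· * ·) (1 : Matrix (Fin (n tf)) (Fin (n tf)) ℝ) (Q tf.succ)))) := by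
  classical
  obtain ⟨hρ, hn⟩ := dims_pos hρ0 hUmin
  have hUT : ttEval n ρ U = ttEval n ρ T := by rw [hUA, hTA]
  have hVT : ttEval n ρ V = ttEval n ρ T := by rw [hVA, hTA]
  have hTU : ttEval n ρ T = ttEval n ρ U := by rw [hUA, hTA]
  have hTV : ttEval n ρ T = ttEval n ρ V := by rw [hVA, hTA]
  choose M hM using fun s => exists_transfer_L hρ0 hρd hρ hn hUT hTmin s
  choose M' hM' using fun s => exists_transfer_L hρ0 hρd hρ hn hTU hUmin s
  choose K hK using fun s => exists_transfer_R hρ0 hρ hn hVT hTmin s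
  choose K' hK' using fun s => exists_transfer_R hρ0 hρ hn hTV hVmin s
  have hUinj := fun s => Lmat_inj hρ0 hn hUmin s
  have hTinjL := fun s => Lmat_inj hρ0 hn hTmin s
  have hTinjR := fun s => Rmat_inj hρd hn hTmin s
  have hVinjR := fun s => Rmat_inj hρd hn hVmin s
  have hMinv : ∀ s, M' s * M s = 1 ∧ M s * M' s = 1 := by
    intro s
    have h1 : Lmat T s * (M' s * M s) = Lmat T s * (1 : Matrix (Fin (ρ s)) (Fin (ρ s)) ℝ) := by
      rw [Matrix.mul_one, ← Matrix.mul_assoc, ← hM' s, ← hM s]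
    have h2 := mul_left_cancel_of_inj (Lmat T s) (hTinjL s) h1
    exact ⟨h2, mul_eq_one_comm.mp h2⟩
  have hKinv : ∀ s, K s * K' s = 1 ∧ K' s * K s = 1 := by
    intro s
    have h1 : (K s * K' s) * Rmat T s = (1 : Matrix (Fin (ρ s)) (Fin (ρ s)) ℝ) * Rmat T s := by
      rw [Matrix.one_mul, Matrix.mul_assoc, ← hK' s, ← hK s]
    have h2 := mul_right_cancel_of_inj (Rmat T s) (hTinjR s) h1
    exact ⟨h2, mul_eq_one_comm.mp h2⟩
  have hMorth : ∀ s : Fin (d + 1), (s : ℕ) < t → (M s)ᵀ * M s = 1 := by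
    intro s hst
    have hUo : ∀ j : Fin d, (j : ℕ) < (s : ℕ) → LeftOrth (U j) := fun j hj =>
      hUorth.1 j (by omega)
    have hTo : ∀ j : Fin d, (j : ℕ) < (s : ℕ) → LeftOrth (T j) := fun j hj =>
      hTorth.1 j (by omega)
    have hgU := Lmat_gram_mat hρ0 hn U s hUo
    have hgT := Lmat_gram_mat hρ0 hn T s hTo
    have hc : (0:ℝ) < ∏ j : Fin d, if (s : ℕ) ≤ (j : ℕ) then (n j : ℝ) else 1 := by
      refine Finset.prod_pos fun j _ => ?_
      by_cases h : (s : ℕ) ≤ (j : ℕ)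
      · rw [if_pos h]; exact_mod_cast hn j
      · rw [if_neg h]; norm_num
    have e1 : (Lmat T s)ᵀ * Lmat T s = (M s)ᵀ * ((Lmat U s)ᵀ * Lmat U s) * (M s) := by
      rw [hM s, Matrix.transpose_mul]
      simp only [Matrix.mul_assoc]
    have e2 : (∏ j : Fin d, if (s : ℕ) ≤ (j : ℕ) then (n j : ℝ) else 1)
        • (1 : Matrix (Fin (ρ s)) (Fin (ρ s)) ℝ)
        = (∏ j : Fin d, if (s : ℕ) ≤ (j : ℕ) then (n j : ℝ) else 1) • ((M s)ᵀ * M s) := by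
      calc (∏ j : Fin d, if (s : ℕ) ≤ (j : ℕ) then (n j : ℝ) else 1)
            • (1 : Matrix (Fin (ρ s)) (Fin (ρ s)) ℝ)
          = (Lmat T s)ᵀ * Lmat T s := hgT.symm
        _ = (M s)ᵀ * ((Lmat U s)ᵀ * Lmat U s) * (M s) := e1
        _ = (M s)ᵀ * ((∏ j : Fin d, if (s : ℕ) ≤ (j : ℕ) then (n j : ℝ) else 1)
              • (1 : Matrix (Fin (ρ s)) (Fin (ρ s)) ℝ)) * (M s) := by rw [hgU]
        _ = (∏ j : Fin d, if (s : ℕ) ≤ (j : ℕ) then (n j : ℝ) else 1)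
              • ((M s)ᵀ * M s) := by
            rw [Matrix.mul_smul, Matrix.mul_one, Matrix.smul_mul]
    exact ((smul_right_injective (Matrix (Fin (ρ s)) (Fin (ρ s)) ℝ) hc.ne') e2).symm
  have hKorth : ∀ s : Fin (d + 1), t ≤ (s : ℕ) → K s * (K s)ᵀ = 1 := by
    intro s hst
    have hTo : ∀ j : Fin d, (s : ℕ) ≤ (j : ℕ) → RightOrth (T j) := fun j hj =>
      hTorth.2 j (by omega)
    have hVo : ∀ j : Fin d, (s : ℕ) ≤ (j : ℕ) → RightOrth (V j) := fun j hj =>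
      hVorth.2 j (by omega)
    have hgV := Rmat_gram_mat hρd hn V s hVo
    have hgT := Rmat_gram_mat hρd hn T s hTo
    have hc : (0:ℝ) < ∏ j : Fin d, if (j : ℕ) < (s : ℕ) then (n j : ℝ) else 1 := by
      refine Finset.prod_pos fun j _ => ?_
      by_cases h : (j : ℕ) < (s : ℕ)
      · rw [if_pos h]; exact_mod_cast hn j
      · rw [if_neg h]; norm_num
    have e1 : Rmat T s * (Rmat T s)ᵀ = K s * (Rmat V s * (Rmat V s)ᵀ) * (K s)ᵀ := by
      rw [hK s, Matrix.transpose_mul]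
      simp only [Matrix.mul_assoc]
    have e2 : (∏ j : Fin d, if (j : ℕ) < (s : ℕ) then (n j : ℝ) else 1)
        • (1 : Matrix (Fin (ρ s)) (Fin (ρ s)) ℝ)
        = (∏ j : Fin d, if (j : ℕ) < (s : ℕ) then (n j : ℝ) else 1) • (K s * (K s)ᵀ) := by
      calc (∏ j : Fin d, if (j : ℕ) < (s : ℕ) then (n j : ℝ) else 1)
            • (1 : Matrix (Fin (ρ s)) (Fin (ρ s)) ℝ)
          = Rmat T s * (Rmat T s)ᵀ := hgT.symm
        _ = K s * (Rmat V s * (Rmat V s)ᵀ) * (K s)ᵀ := e1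
        _ = K s * ((∏ j : Fin d, if (j : ℕ) < (s : ℕ) then (n j : ℝ) else 1)
              • (1 : Matrix (Fin (ρ s)) (Fin (ρ s)) ℝ)) * (K s)ᵀ := by rw [hgV]
        _ = (∏ j : Fin d, if (j : ℕ) < (s : ℕ) then (n j : ℝ) else 1)
              • (K s * (K s)ᵀ) := by
            rw [Matrix.mul_smul, Matrix.mul_one, Matrix.smul_mul]
    exact ((smul_right_injective (Matrix (Fin (ρ s)) (Fin (ρ s)) ℝ) hc.ne') e2).symm
  have hLT0 : Lmat T 0 = Lmat U 0 := by ext i β; rfl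
  have hM0 : M 0 = 1 := by
    apply mul_left_cancel_of_inj (Lmat U 0) (hUinj 0)
    rw [Matrix.mul_one, ← hM 0]
    exact hLT0
  have hRTlast : Rmat T (Fin.last d) = Rmat V (Fin.last d) := by
    ext β i; rw [Rmat_last, Rmat_last]
  have hKlast : K (Fin.last d) = 1 := by
    apply mul_right_cancel_of_inj (Rmat V (Fin.last d)) (hVinjR (Fin.last d))
    rw [Matrix.one_mul, ← hK (Fin.last d)]
    exact hRTlast
  refine ⟨fun s => if (s : ℕ) < t then M s else (K s)ᵀ, ?_, ?_, ?_, ?_, ?_, ?_⟩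
  · -- orthogonality
    intro s
    by_cases h : (s : ℕ) < t
    · simp only [if_pos h]
      have h1 := hMorth s h
      exact ⟨h1, mul_eq_one_comm.mp h1⟩
    · simp only [if_neg h]
      have h1 := hKorth s (by omega)
      rw [Matrix.transpose_transpose]
      exact ⟨h1, mul_eq_one_comm.mp h1⟩
  · -- Q 0 = 1
    have h0 : (((0 : Fin (d + 1))) : ℕ) < t := by simp only [Fin.val_zero]; omega
    simp only [if_pos h0]
    exact hM0
  · -- Q last = 1
    have hlast : ¬ (((Fin.last d) : ℕ) < t) := by simp only [Fin.val_last]; omega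
    simp only [if_neg hlast]
    rw [hKlast, Matrix.transpose_one]
  · -- left cores s.val + 2 ≤ t
    intro s hs
    have hcs : ((s.castSucc : Fin (d + 1)) : ℕ) < t := by
      simp only [Fin.coe_castSucc]; omega
    have hsu : ((s.succ : Fin (d + 1)) : ℕ) < t := by
      simp only [Fin.val_succ]; omega
    simp only [if_pos hcs, if_pos hsu]
    have horthcs := hMorth s.castSucc hcs
    apply unfold_left_of_slices s (M s.castSucc)ᵀ (M s.succ)
    intro x
    have h1 := sliceL s (M s.castSucc) (M s.succ) (hM s.castSucc) (hM s.succ)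
      (hUinj s.castSucc) x
    calc Matrix.of (fun β α => T s β x α)
        = ((M s.castSucc)ᵀ * M s.castSucc) * Matrix.of (fun β α => T s β x α) := by
          rw [horthcs, Matrix.one_mul]
      _ = (M s.castSucc)ᵀ * (M s.castSucc * Matrix.of (fun β α => T s β x α)) :=
          Matrix.mul_assoc _ _ _
      _ = (M s.castSucc)ᵀ * (Matrix.of (fun β α => U s β x α) * M s.succ) := by rw [h1]
  · -- right cores t ≤ s.val
    intro s hs
    have hcs : ¬ (((s.castSucc : Fin (d + 1)) : ℕ) < t) := by
      simp only [Fin.coe_castSucc]; omega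
    have hsu : ¬ (((s.succ : Fin (d + 1)) : ℕ) < t) := by
      simp only [Fin.val_succ]; omega
    simp only [if_neg hcs, if_neg hsu, Matrix.transpose_transpose]
    have horthsu := hKorth s.succ (by simp only [Fin.val_succ]; omega)
    apply unfold_right_of_slices s (K s.castSucc) (K s.succ)ᵀ
    intro x
    have h1 := sliceR s (K s.castSucc) (K s.succ) (hK s.castSucc) (hK s.succ)
      (hVinjR s.succ) x
    calc Matrix.of (fun β γ => T s β x γ)
        = Matrix.of (fun β γ => T s β x γ) * (K s.succ * (K s.succ)ᵀ) := by
          rw [horthsu, Matrix.mul_one]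
      _ = (Matrix.of (fun β γ => T s β x γ) * K s.succ) * (K s.succ)ᵀ :=
          (Matrix.mul_assoc _ _ _).symm
      _ = (K s.castSucc * Matrix.of (fun β γ => V s β x γ)) * (K s.succ)ᵀ := by rw [h1]
  · -- the middle core
    intro tf htf
    have hAeL : ∀ (G : ∀ s : Fin d, Fin (ρ s.castSucc) → Fin (n s) → Fin (ρ s.succ) → ℝ),
        ttEval n ρ G = A → Lmat G (Fin.last d) = Matrix.of (fun i _ => A i) := by
      intro G hGA
      have hss : Subsingleton (Fin (ρ (Fin.last d))) := by rw [hρd]; infer_instance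
      ext i β
      have hdg := diag_eq hρ0 hρ G (Fin.last d) i
      simp only [Rmat_last, mul_one] at hdg
      calc Lmat G (Fin.last d) i β
          = ∑ β', Lmat G (Fin.last d) i β' :=
            (by haveI := hss; exact (Fintype.sum_subsingleton (fun β' => Lmat G (Fin.last d) i β') β).symm)
        _ = ttEval n ρ G i := hdg
        _ = A i := by rw [hGA]
    have hAeR : ∀ (G : ∀ s : Fin d, Fin (ρ s.castSucc) → Fin (n s) → Fin (ρ s.succ) → ℝ),
        ttEval n ρ G = A → Rmat G 0 = Matrix.of (fun _ i => A i) := by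
      intro G hGA
      have hss : Subsingleton (Fin (ρ 0)) := by rw [hρ0]; infer_instance
      ext β i
      have hdg := diag_eq hρ0 hρ G 0 i
      have hL : ∀ β' : Fin (ρ 0), Lmat G 0 i β' = 1 := fun _ => rfl
      simp only [hL, one_mul] at hdg
      calc Rmat G 0 β i
          = ∑ β', Rmat G 0 β' i :=
            (by haveI := hss; exact (Fintype.sum_subsingleton (fun β' => Rmat G 0 β' i) β).symm)
        _ = ttEval n ρ G i := hdg
        _ = A i := by rw [hGA]
    refine ⟨?_, ?_, ?_⟩
    · -- t = d
      intro htdd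
      have hsucc : tf.succ = Fin.last d := by
        apply Fin.ext
        simp only [Fin.val_succ, Fin.val_last]
        omega
      have hMlast : M (Fin.last d) = 1 := by
        apply mul_left_cancel_of_inj (Lmat U (Fin.last d)) (hUinj (Fin.last d))
        rw [Matrix.mul_one, ← hM (Fin.last d)]
        rw [hAeL T hTA, hAeL U hUA]
      have hMsucc : M tf.succ = 1 := by rw [hsucc]; exact hMlast
      have hcs : ((tf.castSucc : Fin (d + 1)) : ℕ) < t := by
        simp only [Fin.coe_castSucc]; omega
      simp only [if_pos hcs]
      have horthcs := hMorth tf.castSucc hcs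
      have hres : leftUnf (T tf)
          = Matrix.kroneckerMap (· * ·) (1 : Matrix (Fin (n tf)) (Fin (n tf)) ℝ)
              (M tf.castSucc)ᵀ * leftUnf (U tf) * (1 : Matrix (Fin (ρ tf.succ)) (Fin (ρ tf.succ)) ℝ) := by
        apply unfold_left_of_slices tf (M tf.castSucc)ᵀ 1
        intro x
        have h1 := sliceL tf (M tf.castSucc) (M tf.succ) (hM tf.castSucc) (hM tf.succ)
          (hUinj tf.castSucc) x
        rw [hMsucc, Matrix.mul_one] at h1
        calc Matrix.of (fun β α => T tf β x α)
            = ((M tf.castSucc)ᵀ * M tf.castSucc) * Matrix.of (fun β α => T tf β x α) := by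
              rw [horthcs, Matrix.one_mul]
          _ = (M tf.castSucc)ᵀ * (M tf.castSucc * Matrix.of (fun β α => T tf β x α)) :=
              Matrix.mul_assoc _ _ _
          _ = (M tf.castSucc)ᵀ * Matrix.of (fun β α => U tf β x α) := by rw [h1]
          _ = (M tf.castSucc)ᵀ * (Matrix.of (fun β α => U tf β x α)
                * (1 : Matrix (Fin (ρ tf.succ)) (Fin (ρ tf.succ)) ℝ)) := by
              rw [Matrix.mul_one]
      rw [hres, Matrix.mul_one]
    · -- t = 1
      intro ht11
      have hcs0 : tf.castSucc = 0 := by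
        apply Fin.ext
        simp only [Fin.coe_castSucc, Fin.val_zero]
        omega
      have hK0 : K 0 = 1 := by
        apply mul_right_cancel_of_inj (Rmat V 0) (hVinjR 0)
        rw [Matrix.one_mul, ← hK 0]
        rw [hAeR T hTA, hAeR V hVA]
      have hKcs : K tf.castSucc = 1 := by rw [hcs0]; exact hK0
      have hsu : ¬ (((tf.succ : Fin (d + 1)) : ℕ) < t) := by
        simp only [Fin.val_succ]; omega
      simp only [if_neg hsu]
      have horthsu := hKorth tf.succ (by simp only [Fin.val_succ]; omega)
      have hres : rightUnf (T tf)
          = (1 : Matrix (Fin (ρ tf.castSucc)) (Fin (ρ tf.castSucc)) ℝ) * rightUnf (V tf)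
              * Matrix.kroneckerMap (· * ·) (1 : Matrix (Fin (n tf)) (Fin (n tf)) ℝ)
                  (K tf.succ)ᵀ := by
        apply unfold_right_of_slices tf 1 (K tf.succ)ᵀ
        intro x
        have h1 := sliceR tf (K tf.castSucc) (K tf.succ) (hK tf.castSucc) (hK tf.succ)
          (hVinjR tf.succ) x
        rw [hKcs, Matrix.one_mul] at h1
        calc Matrix.of (fun β γ => T tf β x γ)
            = Matrix.of (fun β γ => T tf β x γ) * (K tf.succ * (K tf.succ)ᵀ) := by
              rw [horthsu, Matrix.mul_one]
          _ = (Matrix.of (fun β γ => T tf β x γ) * K tf.succ) * (K tf.succ)ᵀ :=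
              (Matrix.mul_assoc _ _ _).symm
          _ = Matrix.of (fun β γ => V tf β x γ) * (K tf.succ)ᵀ := by rw [h1]
          _ = (1 : Matrix (Fin (ρ tf.castSucc)) (Fin (ρ tf.castSucc)) ℝ)
                * Matrix.of (fun β γ => V tf β x γ) * (K tf.succ)ᵀ := by
              rw [Matrix.one_mul]
      rw [hres, Matrix.one_mul]
    · -- 1 < t < d
      intro h1t htdlt
      have hcs : ((tf.castSucc : Fin (d + 1)) : ℕ) < t := by
        simp only [Fin.coe_castSucc]; omega
      have hsu : ¬ (((tf.succ : Fin (d + 1)) : ℕ) < t) := by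
        simp only [Fin.val_succ]; omega
      constructor
      · -- column spaces
        simp only [if_pos hcs]
        have horthcs := hMorth tf.castSucc hcs
        have hres : leftUnf (T tf)
            = Matrix.kroneckerMap (· * ·) (1 : Matrix (Fin (n tf)) (Fin (n tf)) ℝ)
                (M tf.castSucc)ᵀ * leftUnf (U tf) * M tf.succ := by
          apply unfold_left_of_slices tf (M tf.castSucc)ᵀ (M tf.succ)
          intro x
          have h1 := sliceL tf (M tf.castSucc) (M tf.succ) (hM tf.castSucc) (hM tf.succ)
            (hUinj tf.castSucc) x
          calc Matrix.of (fun β α => T tf β x α)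
              = ((M tf.castSucc)ᵀ * M tf.castSucc) * Matrix.of (fun β α => T tf β x α) := by
                rw [horthcs, Matrix.one_mul]
            _ = (M tf.castSucc)ᵀ * (M tf.castSucc * Matrix.of (fun β α => T tf β x α)) :=
                Matrix.mul_assoc _ _ _
            _ = (M tf.castSucc)ᵀ * (Matrix.of (fun β α => U tf β x α) * M tf.succ) := by
                rw [h1]
        rw [hres]
        exact colSpace_mul_inv _ (M tf.succ) (M' tf.succ) (hMinv tf.succ).2 (hMinv tf.succ).1
      · -- row spaces
        simp only [if_neg hsu]
        have horthsu := hKorth tf.succ (by simp only [Fin.val_succ]; omega)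
        have hres : rightUnf (T tf)
            = K tf.castSucc * rightUnf (V tf)
                * Matrix.kroneckerMap (· * ·) (1 : Matrix (Fin (n tf)) (Fin (n tf)) ℝ)
                    (K tf.succ)ᵀ := by
          apply unfold_right_of_slices tf (K tf.castSucc) (K tf.succ)ᵀ
          intro x
          have h1 := sliceR tf (K tf.castSucc) (K tf.succ) (hK tf.castSucc) (hK tf.succ)
            (hVinjR tf.succ) x
          calc Matrix.of (fun β γ => T tf β x γ)
              = Matrix.of (fun β γ => T tf β x γ) * (K tf.succ * (K tf.succ)ᵀ) := by
                rw [horthsu, Matrix.mul_one]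
            _ = (Matrix.of (fun β γ => T tf β x γ) * K tf.succ) * (K tf.succ)ᵀ :=
                (Matrix.mul_assoc _ _ _).symm
            _ = (K tf.castSucc * Matrix.of (fun β γ => V tf β x γ)) * (K tf.succ)ᵀ := by
                rw [h1]
        rw [hres, Matrix.mul_assoc]
        exact rowSpace_inv_mul _ (K tf.castSucc) (K' tf.castSucc)
          (hKinv tf.castSucc).1 (hKinv tf.castSucc).2

end TT
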